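/- arXiv:1812.00459 — 5 statements merged into one kernel-verified Lean document; each statement's English description precedes it below -/
import Mathlib

section
/- The integral ∫₀^∞ s^{−3} (s·coth(s) + s²/(sinh(s))² − 2) ds over real s ∈ (0,∞) equals 1/3; equivalently, ζ(2) = (π²/2) · ∫₀^∞ s^{−3} (s·coth(s) + s²/(sinh(s))² − 2) ds = π²/6. -/
open Real MeasureTheory

/-- `coth s = cosh s / sinh s`. -/
noncomputable def coth (s : ℝ) : ℝ := Real.cosh s / Real.sinh s

open Set Filter

lemma aux_nonneg {f f' : ℝ → ℝ} (hd : ∀ x, HasDerivAt f (f' x) x) (h0 : f 0 = 0)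
    (hp : ∀ x, 0 ≤ x → 0 ≤ f' x) : ∀ x, 0 ≤ x → 0 ≤ f x := by
  have hm : MonotoneOn f (Set.Ici 0) := by
    apply monotoneOn_of_deriv_nonneg (convex_Ici 0)
    · exact fun x _ => (hd x).continuousAt.continuousWithinAt
    · exact fun x _ => (hd x).differentiableAt.differentiableWithinAt
    · intro x hx
      rw [(hd x).deriv]
      rw [interior_Ici] at hx
      exact hp x (le_of_lt hx)
  intro x hx
  calc (0:ℝ) = f 0 := h0.symm
  _ ≤ f x := hm Set.self_mem_Ici hx hx

lemma key0 : ∀ x : ℝ, 0 ≤ x → 0 ≤ x * Real.cosh x - Real.sinh x := by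
  apply aux_nonneg (f' := fun x => x * Real.sinh x)
  · intro x
    have h := ((hasDerivAt_id x).mul (Real.hasDerivAt_cosh x)).sub (Real.hasDerivAt_sinh x)
    refine h.congr_deriv ?_
    simp only [id_eq]; ring
  · simp
  · intro x hx; exact mul_nonneg hx (Real.sinh_nonneg_iff.mpr hx)

lemma key1 : ∀ x : ℝ, 0 ≤ x →
    0 ≤ x * Real.cosh x * Real.sinh x + x ^ 2 - 2 * Real.sinh x ^ 2 := by
  have L3 : ∀ x : ℝ, 0 ≤ x →
      0 ≤ 4*x*(Real.sinh x^2 + Real.cosh x^2) - 4*(Real.sinh x * Real.cosh x) := by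
    apply aux_nonneg (f' := fun x => 16 * x * Real.sinh x * Real.cosh x)
    · intro x
      have h1 : HasDerivAt (fun y : ℝ => 4*y*(Real.sinh y^2 + Real.cosh y^2) - 4*(Real.sinh y * Real.cosh y))
          (4*(Real.sinh x^2 + Real.cosh x^2) + 4*x*(2*Real.sinh x*Real.cosh x + 2*Real.cosh x*Real.sinh x)
            - 4*(Real.cosh x*Real.cosh x + Real.sinh x*Real.sinh x)) x := by
        have := ((((hasDerivAt_id x).const_mul 4).mul
          (((Real.hasDerivAt_sinh x).pow 2).add ((Real.hasDerivAt_cosh x).pow 2)))).sub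
          (((Real.hasDerivAt_sinh x).mul (Real.hasDerivAt_cosh x)).const_mul 4)
        refine this.congr_deriv ?_
        simp only [id_eq, Pi.add_apply, Pi.mul_apply, Pi.pow_apply]; ring
      convert h1 using 1
      ring
    · simp
    · intro x hx
      have := Real.sinh_nonneg_iff.mpr hx
      have := (Real.cosh_pos x).le
      positivity
  have L2 : ∀ x : ℝ, 0 ≤ x →
      0 ≤ 4*x*(Real.sinh x*Real.cosh x) + 2 - 2*Real.sinh x^2 - 2*Real.cosh x^2 := by
    apply aux_nonneg (f' := fun x => 4*x*(Real.sinh x^2 + Real.cosh x^2) - 4*(Real.sinh x * Real.cosh x))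
    · intro x
      have := ((((hasDerivAt_id x).const_mul 4).mul
          ((Real.hasDerivAt_sinh x).mul (Real.hasDerivAt_cosh x))).add_const 2).sub
          ((((Real.hasDerivAt_sinh x).pow 2).const_mul 2).add
            (((Real.hasDerivAt_cosh x).pow 2).const_mul 2))
      have heq : (fun y : ℝ => 4*y*(Real.sinh y*Real.cosh y) + 2 - 2*Real.sinh y^2 - 2*Real.cosh y^2)
          = fun y : ℝ => (4*(id y)*(Real.sinh y*Real.cosh y) + 2) - (2*Real.sinh y^2 + 2*Real.cosh y^2) := by
        funext y; simp only [id_eq]; ring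
      rw [heq]
      refine this.congr_deriv ?_
      simp only [id_eq, Pi.add_apply, Pi.mul_apply, Pi.pow_apply]; ring
    · simp [Real.cosh_zero]
    · exact L3
  have L1 : ∀ x : ℝ, 0 ≤ x →
      0 ≤ x*(Real.sinh x^2 + Real.cosh x^2) + 2*x - 3*(Real.sinh x*Real.cosh x) := by
    apply aux_nonneg (f' := fun x => 4*x*(Real.sinh x*Real.cosh x) + 2 - 2*Real.sinh x^2 - 2*Real.cosh x^2)
    · intro x
      have := (((hasDerivAt_id x).mul
          (((Real.hasDerivAt_sinh x).pow 2).add ((Real.hasDerivAt_cosh x).pow 2))).add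
          ((hasDerivAt_id x).const_mul 2)).sub
          (((Real.hasDerivAt_sinh x).mul (Real.hasDerivAt_cosh x)).const_mul 3)
      refine this.congr_deriv ?_
      simp only [id_eq, Pi.add_apply, Pi.mul_apply, Pi.pow_apply]; ring
    · simp
    · exact L2
  apply aux_nonneg (f' := fun x => x*(Real.sinh x^2 + Real.cosh x^2) + 2*x - 3*(Real.sinh x*Real.cosh x))
  · intro x
    have := ((((hasDerivAt_id x).mul (Real.hasDerivAt_cosh x)).mul (Real.hasDerivAt_sinh x)).add
        (hasDerivAt_pow 2 x)).sub (((Real.hasDerivAt_sinh x).pow 2).const_mul 2)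
    refine this.congr_deriv ?_
    simp only [id_eq, Pi.add_apply, Pi.mul_apply, Pi.pow_apply]; ring
  · simp
  · exact L1

lemma key2 : ∀ x : ℝ, 0 ≤ x → x^3/3 ≤ x * Real.cosh x - Real.sinh x := by
  intro x hx
  have := aux_nonneg (f := fun x => x * Real.cosh x - Real.sinh x - x^3/3)
    (f' := fun x => x * Real.sinh x - x^2) ?_ (by simp) ?_ x hx
  · linarith
  · intro y
    have := (((hasDerivAt_id y).mul (Real.hasDerivAt_cosh y)).sub (Real.hasDerivAt_sinh y)).sub
      ((hasDerivAt_pow 3 y).div_const 3)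
    refine this.congr_deriv ?_
    simp only [id_eq]; ring
  · intro y hy
    have h := Real.self_le_sinh_iff.mpr hy
    nlinarith

lemma key3 : ∀ x : ℝ, 0 ≤ x → x * Real.cosh x - Real.sinh x ≤ x^3/3 * Real.cosh x := by
  intro x hx
  have := aux_nonneg (f := fun x => x^3/3 * Real.cosh x - (x * Real.cosh x - Real.sinh x))
    (f' := fun x => x^2 * Real.cosh x + x^3/3 * Real.sinh x - x * Real.sinh x) ?_ (by simp) ?_ x hx
  · linarith
  · intro y
    have := (((hasDerivAt_pow 3 y).div_const 3).mul (Real.hasDerivAt_cosh y)).sub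
      (((hasDerivAt_id y).mul (Real.hasDerivAt_cosh y)).sub (Real.hasDerivAt_sinh y))
    refine this.congr_deriv ?_
    simp only [id_eq]; ring
  · intro y hy
    have h0 := key0 y hy
    have hs := Real.sinh_nonneg_iff.mpr hy
    nlinarith [mul_nonneg hy h0, mul_nonneg (pow_nonneg hy 3) hs]

noncomputable def Gaux (x : ℝ) : ℝ :=
  if x = 0 then -(1/3) else (Real.sinh x - x * Real.cosh x) / (x^2 * Real.sinh x)

lemma Gaux_deriv {x : ℝ} (hx : 0 < x) :
    HasDerivAt Gaux (x ^ (-3 : ℤ) * (x * coth x + x ^ 2 / Real.sinh x ^ 2 - 2)) x := by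
  have hs : 0 < Real.sinh x := Real.sinh_pos_iff.mpr hx
  have hD : x ^ 2 * Real.sinh x ≠ 0 := by positivity
  have hN : HasDerivAt (fun y => Real.sinh y - y * Real.cosh y) (-(x * Real.sinh x)) x := by
    have := (Real.hasDerivAt_sinh x).sub ((hasDerivAt_id x).mul (Real.hasDerivAt_cosh x))
    refine this.congr_deriv ?_
    simp only [id_eq]; ring
  have hDen : HasDerivAt (fun y => y ^ 2 * Real.sinh y)
      (2 * x * Real.sinh x + x ^ 2 * Real.cosh x) x := by
    have := (hasDerivAt_pow 2 x).mul (Real.hasDerivAt_sinh x)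
    refine this.congr_deriv ?_
    push_cast; ring
  have h := hN.div hDen hD
  have heq : Gaux =ᶠ[nhds x] fun y => (Real.sinh y - y * Real.cosh y) / (y ^ 2 * Real.sinh y) := by
    filter_upwards [Ioi_mem_nhds hx] with y hy
    simp [Gaux, ne_of_gt (show (0:ℝ) < y from hy)]
  apply HasDerivAt.congr_of_eventuallyEq ?_ heq
  refine h.congr_deriv ?_
  symm
  have hcs := Real.cosh_sq_sub_sinh_sq x
  have hx' : x ≠ 0 := ne_of_gt hx
  unfold coth
  rw [zpow_neg, show ((3:ℤ) : ℤ) = (3:ℕ) from rfl, zpow_natCast]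
  field_simp
  linear_combination (-x^2) * hcs

lemma cosh_le_two_sinh {x : ℝ} (hx : 1 ≤ x) : Real.cosh x ≤ 2 * Real.sinh x := by
  rw [Real.cosh_eq, Real.sinh_eq, Real.exp_neg]
  have h3 : 0 < Real.exp x := Real.exp_pos x
  have h1 : 2 ≤ Real.exp x := by have := Real.add_one_le_exp x; linarith
  have h2 : Real.exp x * (Real.exp x)⁻¹ = 1 := mul_inv_cancel₀ h3.ne'
  rw [div_le_iff₀ (by norm_num : (0:ℝ) < 2)] at *
  nlinarith [h2, h1, h3]

lemma Gaux_tendsto_atTop : Filter.Tendsto Gaux Filter.atTop (nhds 0) := by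
  have hlim : Filter.Tendsto (fun x : ℝ => -2 / x) Filter.atTop (nhds 0) :=
    tendsto_const_nhds.div_atTop tendsto_id
  apply tendsto_of_tendsto_of_tendsto_of_le_of_le' hlim tendsto_const_nhds
  · filter_upwards [Filter.eventually_ge_atTop 1] with x hx1
    have hx : 0 < x := lt_of_lt_of_le one_pos hx1
    have hs : 0 < Real.sinh x := Real.sinh_pos_iff.mpr hx
    have hc := cosh_le_two_sinh hx1
    rw [show Gaux x = (Real.sinh x - x * Real.cosh x) / (x^2 * Real.sinh x) by
      simp [Gaux, hx.ne']]
    rw [div_le_div_iff₀ hx (by positivity)]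
    nlinarith [mul_nonneg hx.le hs.le, mul_nonneg (mul_nonneg hx.le hx.le) hs.le]
  · filter_upwards [Filter.eventually_ge_atTop 1] with x hx1
    have hx : 0 < x := lt_of_lt_of_le one_pos hx1
    have hs : 0 < Real.sinh x := Real.sinh_pos_iff.mpr hx
    rw [show Gaux x = (Real.sinh x - x * Real.cosh x) / (x^2 * Real.sinh x) by
      simp [Gaux, hx.ne']]
    apply div_nonpos_of_nonpos_of_nonneg
    · have := key0 x hx.le; linarith
    · positivity

lemma x_div_sinh_tendsto : Filter.Tendsto (fun x : ℝ => x / Real.sinh x)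
    (nhdsWithin 0 (Set.Ioi 0)) (nhds 1) := by
  have h1 : Filter.Tendsto (fun x : ℝ => Real.sinh x / x) (nhdsWithin 0 {(0:ℝ)}ᶜ) (nhds 1) := by
    have := hasDerivAt_iff_tendsto_slope.mp (Real.hasDerivAt_sinh 0)
    rw [Real.cosh_zero] at this
    refine this.congr' ?_
    filter_upwards with x
    simp [slope_def_field]
  have h2 : Filter.Tendsto (fun x : ℝ => x / Real.sinh x) (nhdsWithin 0 {(0:ℝ)}ᶜ) (nhds 1) := by
    have h2' := h1.inv₀ one_ne_zero
    norm_num at h2'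
    refine h2'.congr' ?_
    filter_upwards with x
    simp [inv_div]
  have h3 : nhdsWithin (0:ℝ) (Set.Ioi 0) ≤ nhdsWithin 0 {(0:ℝ)}ᶜ :=
    nhdsWithin_mono 0 (fun x hx => ne_of_gt hx)
  exact h2.mono_left h3

lemma Gaux_cont : ContinuousWithinAt Gaux (Set.Ici 0) 0 := by
  rw [← continuousWithinAt_Ioi_iff_Ici]
  have hxs := x_div_sinh_tendsto
  have hc : Filter.Tendsto Real.cosh (nhdsWithin (0:ℝ) (Set.Ioi 0)) (nhds 1) := by
    have h0 : Filter.Tendsto Real.cosh (nhdsWithin (0:ℝ) (Set.Ioi 0)) (nhds (Real.cosh 0)) :=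
      (Real.continuous_cosh.tendsto 0).mono_left nhdsWithin_le_nhds
    simpa using h0
  have hlow : Filter.Tendsto (fun x : ℝ => -(Real.cosh x * (x / Real.sinh x) / 3))
      (nhdsWithin 0 (Set.Ioi 0)) (nhds (-(1/3))) := by
    have := ((hc.mul hxs).div_const 3).neg
    norm_num at this ⊢
    exact this
  have hup : Filter.Tendsto (fun x : ℝ => -(x / Real.sinh x / 3))
      (nhdsWithin 0 (Set.Ioi 0)) (nhds (-(1/3))) := by
    have := (hxs.div_const 3).neg
    norm_num at this ⊢
    exact this
  have key : Filter.Tendsto Gaux (nhdsWithin 0 (Set.Ioi 0)) (nhds (-(1/3))) := by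
    apply tendsto_of_tendsto_of_tendsto_of_le_of_le' hlow hup
    · filter_upwards [self_mem_nhdsWithin] with x (hx : 0 < x)
      have hs : 0 < Real.sinh x := Real.sinh_pos_iff.mpr hx
      rw [show Gaux x = -((x * Real.cosh x - Real.sinh x) / (x^2 * Real.sinh x)) by
        simp [Gaux, hx.ne']; ring]
      apply neg_le_neg
      rw [div_le_div_iff₀ (by positivity) (by norm_num : (0:ℝ) < 3)]
      have he : Real.cosh x * (x / Real.sinh x) * (x^2 * Real.sinh x)
          = Real.cosh x * x^3 := by field_simp
      rw [he]
      have := key3 x hx.le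
      nlinarith
    · filter_upwards [self_mem_nhdsWithin] with x (hx : 0 < x)
      have hs : 0 < Real.sinh x := Real.sinh_pos_iff.mpr hx
      rw [show Gaux x = -((x * Real.cosh x - Real.sinh x) / (x^2 * Real.sinh x)) by
        simp [Gaux, hx.ne']; ring]
      apply neg_le_neg
      rw [div_le_div_iff₀ (by norm_num : (0:ℝ) < 3) (by positivity)]
      have he : x / Real.sinh x * (x^2 * Real.sinh x) = x^3 := by field_simp
      rw [he]
      have := key2 x hx.le
      linarith
  rw [ContinuousWithinAt, show Gaux 0 = -(1/3) by simp [Gaux]]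
  exact key

/-- `∫₀^∞ s^{-3}(s coth s + s²/(sinh s)² − 2) ds = 1/3`; equivalently
`ζ(2) = (π²/2)·∫ = π²/6`. -/
theorem zeta_two_integral :
    (∫ s in Set.Ioi (0 : ℝ), s ^ (-3 : ℤ) * (s * coth s + s ^ 2 / Real.sinh s ^ 2 - 2)) = 1 / 3
    ∧ riemannZeta 2 = ((Real.pi : ℂ) ^ 2 / 2) *
        ((∫ s in Set.Ioi (0 : ℝ), s ^ (-3 : ℤ) * (s * coth s + s ^ 2 / Real.sinh s ^ 2 - 2) : ℝ) : ℂ)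
    ∧ riemannZeta 2 = (Real.pi : ℂ) ^ 2 / 6 := by
  have hnonneg : ∀ x ∈ Set.Ioi (0:ℝ),
      0 ≤ x ^ (-3 : ℤ) * (x * coth x + x ^ 2 / Real.sinh x ^ 2 - 2) := by
    intro x hx
    have hx' : 0 < x := hx
    have hs : 0 < Real.sinh x := Real.sinh_pos_iff.mpr hx'
    have h := key1 x hx'.le
    have e1 : x * coth x + x ^ 2 / Real.sinh x ^ 2 - 2
        = (x * Real.cosh x * Real.sinh x + x ^ 2 - 2 * Real.sinh x ^ 2) / Real.sinh x ^ 2 := by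
      unfold coth; field_simp
    rw [e1]
    exact mul_nonneg (zpow_nonneg hx'.le _) (div_nonneg h (sq_nonneg _))
  have hint : (∫ s in Set.Ioi (0 : ℝ),
      s ^ (-3 : ℤ) * (s * coth s + s ^ 2 / Real.sinh s ^ 2 - 2)) = 1 / 3 := by
    rw [integral_Ioi_of_hasDerivAt_of_nonneg Gaux_cont (fun x hx => Gaux_deriv hx) hnonneg
      Gaux_tendsto_atTop]
    simp [Gaux]
  refine ⟨hint, ?_, riemannZeta_two⟩
  rw [hint, riemannZeta_two]
  push_cast
  ring
end

section
/- ζ(3) = −π² · ∫₀^∞ s^{−3} ( coth(s) − 1/s − s/3 ) ds, where the integral is over real s ∈ (0,∞). -/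
open Real MeasureTheory

lemma exp_int_mul_pi_I (n : ℤ) : Complex.exp ((n : ℂ) * (π * Complex.I)) = (-1) ^ n := by
  rw [Complex.exp_int_mul, Complex.exp_pi_mul_I]

lemma sub_I_ne (a : ℝ) (ha : 0 < a) (n : ℤ) : (a : ℂ) - n * Complex.I ≠ 0 := by
  intro h
  have := congrArg Complex.re h
  simp at this
  exact ha.ne' this

lemma add_I_ne (a : ℝ) (ha : 0 < a) (n : ℤ) : (a : ℂ) + n * Complex.I ≠ 0 := by
  intro h
  have := congrArg Complex.re h
  simp at this
  exact ha.ne' this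

lemma key_integral (a : ℝ) (ha : 0 < a) (n : ℤ) :
    (∫ x in (-π)..π, Complex.exp (-(n : ℂ) * x * Complex.I) * Complex.cosh (a * x))
      = (-1) ^ n * (2 * a * Real.sinh (a * π) / ((a : ℂ) ^ 2 + (n : ℂ) ^ 2)) := by
  have h1 : ((a : ℂ) - n * Complex.I) ≠ 0 := sub_I_ne a ha n
  have h2 : (-(a : ℂ) - n * Complex.I) ≠ 0 := by
    intro h
    have := congrArg Complex.re h
    simp at this
    linarith
  have heq : ∀ x : ℝ, Complex.exp (-(n : ℂ) * x * Complex.I) * Complex.cosh (a * x)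
      = (Complex.exp (((a : ℂ) - n * Complex.I) * x) +
         Complex.exp ((-(a : ℂ) - n * Complex.I) * x)) / 2 := by
    intro x
    rw [Complex.cosh, ← mul_div_assoc, mul_add, ← Complex.exp_add, ← Complex.exp_add]
    ring_nf
  rw [intervalIntegral.integral_congr (fun x _ => heq x)]
  have hi1 : IntervalIntegrable (fun x : ℝ => Complex.exp (((a : ℂ) - n * Complex.I) * x))
      MeasureTheory.volume (-π) π :=
    (Complex.continuous_exp.comp (by continuity)).intervalIntegrable _ _
  have hi2 : IntervalIntegrable (fun x : ℝ => Complex.exp ((-(a : ℂ) - n * Complex.I) * x))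
      MeasureTheory.volume (-π) π :=
    (Complex.continuous_exp.comp (by continuity)).intervalIntegrable _ _
  rw [intervalIntegral.integral_div, intervalIntegral.integral_add hi1 hi2,
    integral_exp_mul_complex h1, integral_exp_mul_complex h2]
  have hexp : ∀ b : ℝ, Complex.exp (((b : ℂ) - n * Complex.I) * π)
      = Real.exp (b * π) * (-1) ^ n := by
    intro b
    rw [show ((b : ℂ) - n * Complex.I) * π = (b * π : ℝ) + (-n : ℤ) * (π * Complex.I) by
      push_cast; ring, Complex.exp_add, exp_int_mul_pi_I, Complex.ofReal_exp]
    rw [zpow_neg, ← inv_zpow, inv_neg, inv_one]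
  have hexp' : ∀ b : ℝ, Complex.exp (((b : ℂ) - n * Complex.I) * ((-π : ℝ) : ℂ))
      = Real.exp (-(b * π)) * (-1) ^ n := by
    intro b
    rw [show ((b : ℂ) - n * Complex.I) * ((-π : ℝ) : ℂ) = (-(b * π) : ℝ) + (n : ℤ) * (π * Complex.I) by
      push_cast; ring, Complex.exp_add, exp_int_mul_pi_I, Complex.ofReal_exp]
  have hfac : (a : ℂ) ^ 2 + (n : ℂ) ^ 2
      = ((a : ℂ) - n * Complex.I) * ((a : ℂ) + n * Complex.I) := by
    linear_combination (n : ℂ) ^ 2 * Complex.I_sq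
  have hneg : (-(a:ℂ) - n*Complex.I) = ((-a : ℝ) : ℂ) - n*Complex.I := by push_cast; ring
  rw [hneg, hexp a, hexp' a, hexp (-a), hexp' (-a), hfac, Real.sinh_eq]
  rw [← hneg]
  have h4 := add_I_ne a ha n
  push_cast
  field_simp
  ring

lemma aux_div (A B C D : ℂ) (hD : D ≠ 0) (h : A * 2 + B * 2 = C * D) :
    A * D⁻¹ * 2 + B * D⁻¹ * 2 = C := by
  have h2 : A * D⁻¹ * 2 + B * D⁻¹ * 2 = (A * 2 + B * 2) * D⁻¹ := by ring
  rw [h2, h, mul_assoc, mul_inv_cancel₀ hD, mul_one]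

lemma sq_add_sq_ne (a : ℝ) (ha : 0 < a) (n : ℤ) : (a : ℂ) ^ 2 + (n : ℂ) ^ 2 ≠ 0 := by
  have hfac : (a : ℂ) ^ 2 + (n : ℂ) ^ 2
      = ((a : ℂ) - n * Complex.I) * ((a : ℂ) + n * Complex.I) := by
    linear_combination (n : ℂ) ^ 2 * Complex.I_sq
  rw [hfac]
  exact mul_ne_zero (sub_I_ne a ha n) (add_I_ne a ha n)

lemma summable_inv_sq_add (a : ℝ) (ha : 0 < a) :
    Summable (fun n : ℤ => 1 / (a ^ 2 + (n : ℝ) ^ 2)) := by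
  have Sg : Summable (fun n : ℕ => 1 / ((n : ℝ) + 1) ^ 2) := by
    have h := Real.summable_one_div_nat_pow.mpr (by norm_num : 1 < 2)
    refine ((summable_nat_add_iff 1).mpr h).congr fun n => ?_
    push_cast; ring
  have Snat : Summable (fun n : ℕ => 1 / (a ^ 2 + (n : ℝ) ^ 2)) := by
    rw [← summable_nat_add_iff 1]
    refine Summable.of_nonneg_of_le (fun n => by positivity) (fun n => ?_) Sg
    refine one_div_le_one_div_of_le (by positivity) ?_
    push_cast
    nlinarith [sq_nonneg a]
  refine Summable.of_nat_of_neg (Snat.congr fun n => ?_) (Snat.congr fun n => ?_) <;>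
    push_cast <;> ring

lemma hasSum_int_cosh (a : ℝ) (ha : 0 < a) :
    HasSum (fun n : ℤ => Real.sinh (a * π) * a / (π * (a ^ 2 + (n : ℝ) ^ 2)))
      (Real.cosh (a * π)) := by
  haveI : Fact (0 < 2 * π) := ⟨Real.two_pi_pos⟩
  set f : ℤ → ℝ := fun n => Real.sinh (a * π) * a / (π * (a ^ 2 + (n : ℝ) ^ 2)) with hf
  set g : ℝ → ℂ := fun x => Complex.cosh (a * x) with hg
  have hgc : Continuous g := Complex.continuous_cosh.comp (by continuity)
  have hper : g (-π) = g (-π + 2 * π) := by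
    have h1 : ((a : ℂ)) * ((-π : ℝ) : ℂ) = -(a * π) := by push_cast; ring
    have h2 : ((a : ℂ)) * ((-π + 2 * π : ℝ) : ℂ) = ((a * π : ℝ) : ℂ) := by push_cast; ring
    simp only [g, h1, h2, Complex.cosh_neg]
    norm_cast
  set F : C(AddCircle (2 * π), ℂ) :=
    ⟨AddCircle.liftIco (2 * π) (-π) g, AddCircle.liftIco_continuous hper hgc.continuousOn⟩
    with hF
  have hco : ∀ n : ℤ, fourierCoeff (⇑F) n = ((f n : ℝ) : ℂ) * (-1) ^ n := by
    intro n
    have h0 : fourierCoeff (⇑F) n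
        = fourierCoeffOn (lt_add_of_pos_right (-π) Real.two_pi_pos) g n :=
      fourierCoeff_liftIco_eq g n
    rw [h0, fourierCoeffOn_eq_integral]
    have hint : ∀ x : ℝ, (fourier (-n) (x : AddCircle ((-π + 2 * π) - (-π)))) • g x
        = Complex.exp (-(n : ℂ) * x * Complex.I) * Complex.cosh ((a : ℂ) * x) := by
      intro x
      rw [fourier_coe_apply, smul_eq_mul]
      congr 2
      have hπ : ((π : ℝ) : ℂ) ≠ 0 := Complex.ofReal_ne_zero.mpr Real.pi_ne_zero
      have : ((-π + 2 * π - -π : ℝ) : ℂ) = 2 * π := by push_cast; ring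
      rw [this]
      push_cast
      field_simp
    rw [intervalIntegral.integral_congr fun x _ => hint x]
    rw [show (-π + 2 * π : ℝ) = π by ring]
    rw [key_integral a ha n]
    have h3 := sq_add_sq_ne a ha n
    have hπ : ((π : ℝ) : ℂ) ≠ 0 := Complex.ofReal_ne_zero.mpr Real.pi_ne_zero
    rw [Complex.real_smul, hf]
    push_cast
    have h5 : ((a : ℂ) ^ 2 * (π : ℂ) * 2 + (π : ℂ) * (n : ℂ) ^ 2 * 2) ≠ 0 := by
      have he : ((a : ℂ) ^ 2 * (π : ℂ) * 2 + (π : ℂ) * (n : ℂ) ^ 2 * 2)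
          = (2 * (π : ℂ)) * ((a : ℂ) ^ 2 + (n : ℂ) ^ 2) := by ring
      rw [he]
      exact mul_ne_zero (mul_ne_zero two_ne_zero hπ) h3
    field_simp [h3]
    have h6 : ((π : ℂ) + π) * ((a : ℂ) ^ 2 + (n : ℂ) ^ 2) ≠ 0 := by
      refine mul_ne_zero ?_ h3
      have he : ((π : ℂ) + π) = 2 * (π : ℂ) := by ring
      rw [he]
      exact mul_ne_zero two_ne_zero hπ
    ring
  have hsum : Summable fun n : ℤ => fourierCoeff (⇑F) n := by
    refine Summable.of_norm ?_
    have hn : ∀ n : ℤ, ‖fourierCoeff (⇑F) n‖ = |f n| := by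
      intro n
      rw [hco n, norm_mul, Complex.norm_real]
      simp
    refine (Summable.congr ?_ fun n => (hn n).symm)
    have S0 : Summable f := by
      refine ((summable_inv_sq_add a ha).mul_left (Real.sinh (a * π) * a / π)).congr fun n => ?_
      rw [hf]
      field_simp
    exact S0.abs
  have H := has_pointwise_sum_fourier_series_of_summable hsum ((-π : ℝ) : AddCircle (2 * π))
  have hval : F ((-π : ℝ) : AddCircle (2 * π)) = ((Real.cosh (a * π) : ℝ) : ℂ) := by
    have hmem : (-π : ℝ) ∈ Set.Ico (-π) (-π + 2 * π) :=
      ⟨le_refl _, by linarith [Real.pi_pos]⟩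
    have : F ((-π : ℝ) : AddCircle (2 * π)) = g (-π) := by
      show AddCircle.liftIco (2 * π) (-π) g ((-π : ℝ) : AddCircle (2 * π)) = g (-π)
      exact AddCircle.liftIco_coe_apply hmem
    rw [this]
    have h1 : ((a : ℂ)) * ((-π : ℝ) : ℂ) = -((a * π : ℝ) : ℂ) := by push_cast; ring
    simp only [g, h1, Complex.cosh_neg, Complex.ofReal_cosh]
  have hterm : ∀ n : ℤ, fourierCoeff (⇑F) n • fourier n ((-π : ℝ) : AddCircle (2 * π))
      = ((f n : ℝ) : ℂ) := by
    intro n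
    have hfour : fourier n ((-π : ℝ) : AddCircle (2 * π)) = (-1 : ℂ) ^ (-n) := by
      rw [fourier_coe_apply, ← exp_int_mul_pi_I (-n)]
      congr 1
      have hπ : ((π : ℝ) : ℂ) ≠ 0 := Complex.ofReal_ne_zero.mpr Real.pi_ne_zero
      push_cast
      field_simp
    rw [smul_eq_mul, hfour, hco n, mul_assoc, ← zpow_add₀ (by norm_num : (-1 : ℂ) ≠ 0)]
    simp
  rw [← Complex.hasSum_ofReal]
  convert H using 2 with n
  · exact (hterm n).symm
  · exact hval.symm

lemma hasSum_coth_aux (s : ℝ) (hs : 0 < s) :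
    HasSum (fun n : ℕ => 2 * s / (s ^ 2 + ((n : ℝ) + 1) ^ 2 * π ^ 2)) (coth s - 1 / s) := by
  have hπ := Real.pi_pos
  have hsinh : 0 < Real.sinh s := Real.sinh_pos_iff.mpr hs
  set a := s / π with ha'
  have ha : 0 < a := div_pos hs hπ
  have haπ : a * π = s := div_mul_cancel₀ s (ne_of_gt hπ)
  set F : ℤ → ℝ := fun n => Real.sinh (a * π) * a / (π * (a ^ 2 + (n : ℝ) ^ 2)) with hF
  set G : ℕ → ℝ := fun n => F n + F (-n) with hG
  have H : HasSum G (Real.cosh (a * π) + F 0) := (hasSum_int_cosh a ha).nat_add_neg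
  have H2 : HasSum (fun n => G (n + 1)) (Real.cosh (a * π) + F 0 - G 0) := by
    rw [hasSum_nat_add_iff 1]
    simpa using H
  have H3 := H2.div_const (Real.sinh s)
  have hfun : (fun n : ℕ => G (n + 1) / Real.sinh s)
      = fun n : ℕ => 2 * s / (s ^ 2 + ((n : ℝ) + 1) ^ 2 * π ^ 2) := by
    funext n
    have hden : s ^ 2 + ((n : ℝ) + 1) ^ 2 * π ^ 2 ≠ 0 := by positivity
    simp only [hG, hF, haπ]
    push_cast
    rw [ha']
    field_simp
    ring
  have hval : (Real.cosh (a * π) + F 0 - G 0) / Real.sinh s = coth s - 1 / s := by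
    simp only [hG, hF, haπ, coth]
    push_cast
    rw [ha']
    field_simp
    ring
  rw [hfun, hval] at H3
  exact H3

lemma hasSum_basel_aux (s : ℝ) : HasSum (fun n : ℕ => 2 * s / (((n : ℝ) + 1) ^ 2 * π ^ 2)) (s / 3) := by
  have h1 : HasSum (fun n : ℕ => (1 : ℝ) / (((n + 1 : ℕ) : ℝ)) ^ 2) (π ^ 2 / 6) := by
    rw [hasSum_nat_add_iff (f := fun n : ℕ => (1 : ℝ) / (n : ℝ) ^ 2) 1]
    simpa using hasSum_zeta_two
  have h2 := h1.mul_left (2 * s / π ^ 2)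
  have hfun : (fun n : ℕ => (2 * s / π ^ 2) * ((1 : ℝ) / (((n + 1 : ℕ) : ℝ)) ^ 2))
      = fun n : ℕ => 2 * s / (((n : ℝ) + 1) ^ 2 * π ^ 2) := by
    funext n
    have h : ((n : ℝ) + 1) ≠ 0 := by positivity
    push_cast
    field_simp
  have hval : (2 * s / π ^ 2) * (π ^ 2 / 6) = s / 3 := by
    field_simp
    ring
  rw [hfun, hval] at h2
  exact h2

lemma hasSum_P (s : ℝ) (hs : 0 < s) :
    HasSum (fun n : ℕ => 1 / (((n : ℝ) + 1) ^ 2 * π ^ 2 * (s ^ 2 + ((n : ℝ) + 1) ^ 2 * π ^ 2)))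
      (-(coth s - 1 / s - s / 3) / (2 * s ^ 3)) := by
  have h := ((hasSum_coth_aux s hs).sub (hasSum_basel_aux s)).div_const (-(2 * s ^ 3))
  have hπ := Real.pi_pos
  have hfun : (fun n : ℕ => (2 * s / (s ^ 2 + ((n : ℝ) + 1) ^ 2 * π ^ 2)
        - 2 * s / (((n : ℝ) + 1) ^ 2 * π ^ 2)) / (-(2 * s ^ 3)))
      = fun n : ℕ => 1 / (((n : ℝ) + 1) ^ 2 * π ^ 2 * (s ^ 2 + ((n : ℝ) + 1) ^ 2 * π ^ 2)) := by
    funext n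
    have h1 : ((n : ℝ) + 1) ≠ 0 := by positivity
    have h2 : s ^ 2 + ((n : ℝ) + 1) ^ 2 * π ^ 2 ≠ 0 := by positivity
    field_simp
    ring
  have hval : (coth s - 1 / s - s / 3) / (-(2 * s ^ 3)) = -(coth s - 1 / s - s / 3) / (2 * s ^ 3) := by
    ring
  rw [hfun, hval] at h
  exact h

lemma integrand_eq (s : ℝ) (hs : 0 < s) :
    (s : ℝ) ^ (-3 : ℤ) * (coth s - 1 / s - s / 3)
      = -2 * ∑' n : ℕ, 1 / (((n : ℝ) + 1) ^ 2 * π ^ 2 * (s ^ 2 + ((n : ℝ) + 1) ^ 2 * π ^ 2)) := by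
  rw [(hasSum_P s hs).tsum_eq]
  have hz : (s : ℝ) ^ (-3 : ℤ) = 1 / s ^ 3 := by
    rw [zpow_neg, one_div, show (3 : ℤ) = ((3 : ℕ) : ℤ) by norm_num, zpow_natCast]
  rw [hz]
  field_simp

lemma arctan_primitive {c : ℝ} (hc : 0 < c) :
    (∀ x : ℝ, HasDerivAt (fun s => (1 / c) * Real.arctan (s / c)) ((x ^ 2 + c ^ 2)⁻¹) x) := by
  intro x
  have h1 : HasDerivAt (fun s : ℝ => s / c) (1 / c) x := by
    simpa using (hasDerivAt_id x).div_const c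
  have h2 : HasDerivAt Real.arctan (1 / (1 + (x / c) ^ 2)) (x / c) := Real.hasDerivAt_arctan (x / c)
  have h3 := (h2.comp x h1).const_mul (1 / c)
  refine h3.congr_deriv ?_
  have h4 : 1 + (x / c) ^ 2 ≠ 0 := by positivity
  field_simp
  ring

lemma tendsto_primitive {c : ℝ} (hc : 0 < c) :
    Filter.Tendsto (fun s : ℝ => (1 / c) * Real.arctan (s / c)) Filter.atTop
      (nhds ((1 / c) * (π / 2))) := by
  refine Filter.Tendsto.const_mul _ ?_
  refine (tendsto_nhds_of_tendsto_nhdsWithin Real.tendsto_arctan_atTop).comp ?_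
  exact Filter.tendsto_id.atTop_div_const hc

lemma integrableOn_inv_sq_add_sq {c : ℝ} (hc : 0 < c) :
    IntegrableOn (fun s : ℝ => (s ^ 2 + c ^ 2)⁻¹) (Set.Ioi 0) :=
  integrableOn_Ioi_deriv_of_nonneg
    ((arctan_primitive hc 0).continuousAt.continuousWithinAt)
    (fun x _ => arctan_primitive hc x) (fun x _ => by positivity) (tendsto_primitive hc)

lemma integral_inv_sq_add_sq' {c : ℝ} (hc : 0 < c) :
    ∫ s in Set.Ioi (0 : ℝ), (s ^ 2 + c ^ 2)⁻¹ = π / (2 * c) := by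
  rw [integral_Ioi_of_hasDerivAt_of_nonneg
    ((arctan_primitive hc 0).continuousAt.continuousWithinAt)
    (fun x _ => arctan_primitive hc x) (fun x _ => by positivity) (tendsto_primitive hc)]
  simp [Real.arctan_zero]
  field_simp

lemma P_rewrite (n : ℕ) : (fun s : ℝ => 1 / (((n : ℝ) + 1) ^ 2 * π ^ 2 * (s ^ 2 + ((n : ℝ) + 1) ^ 2 * π ^ 2)))
    = fun s : ℝ => ((((n : ℝ) + 1) * π) ^ 2)⁻¹ * ((s ^ 2 + (((n : ℝ) + 1) * π) ^ 2)⁻¹) := by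
  funext s
  rw [show (((n : ℝ) + 1) * π) ^ 2 = ((n : ℝ) + 1) ^ 2 * π ^ 2 by ring, one_div, mul_inv]

lemma P_pos (n : ℕ) : 0 < ((n : ℝ) + 1) * π := by positivity

lemma P_integrableOn (n : ℕ) :
    IntegrableOn (fun s : ℝ => 1 / (((n : ℝ) + 1) ^ 2 * π ^ 2 * (s ^ 2 + ((n : ℝ) + 1) ^ 2 * π ^ 2)))
      (Set.Ioi 0) := by
  rw [P_rewrite]
  exact (integrableOn_inv_sq_add_sq (P_pos n)).const_mul _

lemma P_integral (n : ℕ) :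
    ∫ s in Set.Ioi (0 : ℝ), 1 / (((n : ℝ) + 1) ^ 2 * π ^ 2 * (s ^ 2 + ((n : ℝ) + 1) ^ 2 * π ^ 2))
      = 1 / (((n : ℝ) + 1) ^ 3) * (1 / (2 * π ^ 2)) := by
  have h1 : (∫ s in Set.Ioi (0 : ℝ), 1 / (((n : ℝ) + 1) ^ 2 * π ^ 2 * (s ^ 2 + ((n : ℝ) + 1) ^ 2 * π ^ 2)))
      = ∫ s in Set.Ioi (0 : ℝ), ((((n : ℝ) + 1) * π) ^ 2)⁻¹ * ((s ^ 2 + (((n : ℝ) + 1) * π) ^ 2)⁻¹) := by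
    rw [P_rewrite]
  rw [h1, MeasureTheory.integral_const_mul, integral_inv_sq_add_sq' (P_pos n)]
  have h2 : ((n : ℝ) + 1) ≠ 0 := by positivity
  field_simp

lemma sum_P_integrals : Summable (fun n : ℕ => 1 / (((n : ℝ) + 1) ^ 3) * (1 / (2 * π ^ 2))) := by
  have h := Real.summable_one_div_nat_pow.mpr (by norm_num : 1 < 3)
  have h2 := (summable_nat_add_iff (f := fun n : ℕ => (1 : ℝ) / (n : ℝ) ^ 3) 1).mpr h
  exact (h2.mul_right (1 / (2 * π ^ 2))).congr fun n => by push_cast; ring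

lemma summable_Z : Summable (fun n : ℕ => (1 : ℝ) / (n : ℝ) ^ 3) :=
  Real.summable_one_div_nat_pow.mpr (by norm_num : 1 < 3)

/-- `ζ(3) = −π² ∫₀^∞ s^{-3}(coth s − 1/s − s/3) ds`. -/
theorem zeta_three_integral_coth :
    riemannZeta 3 = -(Real.pi : ℂ) ^ 2 *
      ((∫ s in Set.Ioi (0 : ℝ), s ^ (-3 : ℤ) * (coth s - 1 / s - s / 3) : ℝ) : ℂ) := by
  have hπ := Real.pi_pos
  set Z : ℝ := ∑' n : ℕ, 1 / ((n : ℝ) + 1) ^ 3 with hZ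
  -- Step 1: rewrite the integrand
  have hcong : (∫ s in Set.Ioi (0 : ℝ), s ^ (-3 : ℤ) * (coth s - 1 / s - s / 3))
      = ∫ s in Set.Ioi (0 : ℝ),
          -2 * ∑' n : ℕ, 1 / (((n : ℝ) + 1) ^ 2 * π ^ 2 * (s ^ 2 + ((n : ℝ) + 1) ^ 2 * π ^ 2)) :=
    setIntegral_congr_fun measurableSet_Ioi fun s hs => integrand_eq s hs
  -- Step 2: swap integral and sum
  have hnorm : ∀ n : ℕ, (∫ s in Set.Ioi (0 : ℝ),
        ‖1 / (((n : ℝ) + 1) ^ 2 * π ^ 2 * (s ^ 2 + ((n : ℝ) + 1) ^ 2 * π ^ 2))‖)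
      = ∫ s in Set.Ioi (0 : ℝ), 1 / (((n : ℝ) + 1) ^ 2 * π ^ 2 * (s ^ 2 + ((n : ℝ) + 1) ^ 2 * π ^ 2)) :=
    fun n => setIntegral_congr_fun measurableSet_Ioi fun s _ =>
      Real.norm_of_nonneg (by positivity)
  have hswap : (∑' n : ℕ, ∫ s in Set.Ioi (0 : ℝ),
        1 / (((n : ℝ) + 1) ^ 2 * π ^ 2 * (s ^ 2 + ((n : ℝ) + 1) ^ 2 * π ^ 2)))
      = ∫ s in Set.Ioi (0 : ℝ),
          ∑' n : ℕ, 1 / (((n : ℝ) + 1) ^ 2 * π ^ 2 * (s ^ 2 + ((n : ℝ) + 1) ^ 2 * π ^ 2)) := by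
    refine MeasureTheory.integral_tsum_of_summable_integral_norm (fun n => P_integrableOn n) ?_
    refine sum_P_integrals.congr fun n => ?_
    rw [hnorm n, P_integral n]
  -- Step 3: compute the sum of integrals
  have hsumval : (∑' n : ℕ, ∫ s in Set.Ioi (0 : ℝ),
        1 / (((n : ℝ) + 1) ^ 2 * π ^ 2 * (s ^ 2 + ((n : ℝ) + 1) ^ 2 * π ^ 2)))
      = Z * (1 / (2 * π ^ 2)) := by
    rw [hZ]
    rw [← tsum_mul_right]
    exact tsum_congr fun n => P_integral n
  have hint : (∫ s in Set.Ioi (0 : ℝ), s ^ (-3 : ℤ) * (coth s - 1 / s - s / 3))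
      = -Z / π ^ 2 := by
    rw [hcong, MeasureTheory.integral_const_mul, ← hswap, hsumval]
    field_simp
  -- Step 4: relate Z to riemannZeta 3
  have hzeta : riemannZeta 3 = ((Z : ℝ) : ℂ) := by
    rw [show (3 : ℂ) = ((3 : ℕ) : ℂ) by norm_num, zeta_nat_eq_tsum_of_gt_one (by norm_num)]
    have h1 : ∀ n : ℕ, (1 : ℂ) / (n : ℂ) ^ (3 : ℕ) = (((1 : ℝ) / (n : ℝ) ^ 3 : ℝ) : ℂ) := by
      intro n; push_cast; ring
    rw [tsum_congr h1, ← Complex.ofReal_tsum, Complex.ofReal_inj]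
    rw [summable_Z.tsum_eq_zero_add]
    simp only [Nat.cast_zero]
    rw [hZ]
    have h0 : (1 : ℝ) / (0 : ℝ) ^ 3 = 0 := by norm_num
    rw [h0, zero_add]
    exact tsum_congr fun n => by push_cast; ring
  rw [hzeta, hint]
  push_cast
  have hπc : ((π : ℝ) : ℂ) ≠ 0 := Complex.ofReal_ne_zero.mpr Real.pi_ne_zero
  field_simp
end

section
/- ζ(5) = π⁴ · ∫₀^∞ s^{−5} ( coth(s) − 1/s − s/3 + s³/45 ) ds, where the integral is over real s ∈ (0,∞). -/
open Real MeasureTheory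

namespace ZetaFiveAux

open Complex intervalIntegral

noncomputable instance fact_two_pi_pos : Fact (0 < 2*π) := ⟨by positivity⟩

lemma integrand_eq (a : ℝ) (n : ℤ) (x : ℝ) :
    (fourier (-n) (x : AddCircle (2*π))) • ((Real.cosh (a*(x-π)) : ℂ))
      = (Complex.exp (-(↑a*↑π))/2) * Complex.exp ((↑a - ↑n*I) * ↑x)
        + (Complex.exp (↑a*↑π)/2) * Complex.exp ((-↑a - ↑n*I) * ↑x) := by
  have hpi : (↑π : ℂ) ≠ 0 := by exact_mod_cast Real.pi_ne_zero
  rw [fourier_coe_apply, smul_eq_mul, Real.cosh_eq]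
  push_cast [Complex.ofReal_exp]
  have e1 : ((↑a - ↑n*I)*↑x : ℂ) = 2*↑π*I*(-↑n:ℂ)*↑x/(2*↑π) + ↑a*(↑x-↑π) + ↑a*↑π := by
    field_simp; ring
  have e2 : ((-↑a - ↑n*I)*↑x : ℂ) = 2*↑π*I*(-↑n:ℂ)*↑x/(2*↑π) + -(↑a*(↑x-↑π)) + -(↑a*↑π) := by
    field_simp; ring
  rw [e1, e2, Complex.exp_add, Complex.exp_add, Complex.exp_add, Complex.exp_add]
  have h3 : Complex.exp (-(↑a*↑π) : ℂ) * Complex.exp (↑a*↑π) = 1 := by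
    rw [← Complex.exp_add]; simp
  have key : ∀ z w : ℂ, z * ((Complex.exp w + Complex.exp (-w))/2)
      = Complex.exp (-(↑a*↑π))/2 * (z * Complex.exp w * Complex.exp (↑a*↑π))
        + Complex.exp (↑a*↑π)/2 * (z * Complex.exp (-w) * Complex.exp (-(↑a*↑π))) := by
    intro z w
    linear_combination (-(z * Complex.exp w) / 2) * h3 + (-(z * Complex.exp (-w)) / 2) * h3
  exact key _ _

lemma exp_int_ne {b : ℝ} (hb : b ≠ 0) (n : ℤ) : (↑b - ↑n * I : ℂ) ≠ 0 := by
  intro h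
  rw [Complex.ext_iff] at h
  simp at h
  exact hb h.1

lemma aux1 {b : ℝ} (hb : b ≠ 0) (n : ℤ) :
    ∫ x in (0:ℝ)..(2*π), Complex.exp ((↑b - ↑n*I) * ↑x)
      = (Real.exp (2*π*b) - 1) / (↑b - ↑n*I) := by
  rw [integral_exp_mul_complex (exp_int_ne hb n)]
  congr 1
  have h1 : ((↑b - ↑n*I) * (2*π:ℝ) : ℂ) = ↑(2*π*b) + ((-n : ℤ) : ℂ) * (2*π*I) := by
    push_cast; ring
  rw [h1, Complex.exp_add, Complex.exp_int_mul_two_pi_mul_I, mul_one]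
  simp [Complex.ofReal_exp]

lemma fourierCoeff_cosh (a : ℝ) (ha : 0 < a) (n : ℤ) :
    fourierCoeff (AddCircle.liftIco (2*π) 0 (fun x => (Real.cosh (a*(x-π)) : ℂ))) n
      = ((a * Real.sinh (a*π) / π / (a^2 + (n:ℝ)^2) : ℝ) : ℂ) := by
  rw [fourierCoeff_eq_intervalIntegral _ n 0]
  have hint : ∀ b : ℝ, IntervalIntegrable (fun x : ℝ => Complex.exp ((↑b - ↑n*I) * ↑x))
      MeasureTheory.volume 0 (0 + 2*π) := by
    intro b
    exact (Complex.continuous_exp.comp (by continuity)).intervalIntegrable _ _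
  have hcongr : ∫ x in (0:ℝ)..(0 + 2*π), (fourier (-n) (x : AddCircle (2*π))) •
        (AddCircle.liftIco (2*π) 0 (fun x => (Real.cosh (a*(x-π)) : ℂ)) ↑x)
      = ∫ x in (0:ℝ)..(0 + 2*π), ((Complex.exp (-(↑a*↑π))/2) * Complex.exp ((↑a - ↑n*I) * ↑x)
        + (Complex.exp (↑a*↑π)/2) * Complex.exp ((-↑a - ↑n*I) * ↑x)) := by
    apply intervalIntegral.integral_congr_ae
    have h2 : ∀ᵐ (x:ℝ) ∂MeasureTheory.volume, x ≠ 0 + 2*π := by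
      simp only [ae_iff, not_not, Set.setOf_eq_eq_singleton]
      exact measure_singleton _
    filter_upwards [h2] with x hx hmem
    have hx0 : x ∈ Set.Ico (0:ℝ) (0 + 2*π) := by
      rw [Set.uIoc_of_le (by positivity)] at hmem
      exact ⟨hmem.1.le, lt_of_le_of_ne hmem.2 hx⟩
    rw [AddCircle.liftIco_coe_apply hx0]
    exact integrand_eq a n x
  rw [hcongr]
  rw [intervalIntegral.integral_add ((hint a).const_mul _) (by
    have := (hint (-a)).const_mul (Complex.exp (↑a*↑π)/2)
    push_cast at this ⊢
    exact this)]
  rw [intervalIntegral.integral_const_mul, intervalIntegral.integral_const_mul]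
  have i1 : ∫ x in (0:ℝ)..(0+2*π), Complex.exp ((↑a - ↑n*I) * ↑x)
      = (Real.exp (2*π*a) - 1) / (↑a - ↑n*I) := by
    rw [zero_add]; exact aux1 ha.ne' n
  have i2 : ∫ x in (0:ℝ)..(0+2*π), Complex.exp ((-↑a - ↑n*I) * ↑x)
      = (Real.exp (2*π*(-a)) - 1) / (-↑a - ↑n*I) := by
    rw [zero_add]
    have := aux1 (b := -a) (by simpa using ha.ne') n
    push_cast at this ⊢
    exact this
  rw [i1, i2]
  -- now pure algebra
  have hE0 : (0:ℝ) < Real.exp (a*π) := Real.exp_pos _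
  set E := Real.exp (a*π) with hE
  set S := Real.sinh (a*π) with hS
  have hsinh : S = (E - E⁻¹)/2 := by
    rw [hS, hE, Real.sinh_eq, Real.exp_neg]
  have hc1 : Complex.exp (-(↑a*↑π) : ℂ) = (↑E)⁻¹ := by
    rw [hE, Complex.ofReal_exp, ← Complex.exp_neg]
    congr 1; push_cast; ring
  have hc2 : Complex.exp (↑a*↑π : ℂ) = (↑E : ℂ) := by
    rw [hE, Complex.ofReal_exp]; congr 1; push_cast; ring
  have h2a : Real.exp (2*π*a) = E^2 := by
    rw [hE, sq, ← Real.exp_add]; congr 1; ring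
  have hm2a : Real.exp (2*π*(-a)) = (E^2)⁻¹ := by
    rw [hE, sq, ← Real.exp_add, ← Real.exp_neg]; congr 1; ring
  have hE0' : (↑E : ℂ) ≠ 0 := by exact_mod_cast hE0.ne'
  have hz1 : ((↑a:ℂ) - ↑n*I) ≠ 0 := exp_int_ne ha.ne' n
  have hz2 : ((↑a:ℂ) + ↑n*I) ≠ 0 := by
    intro h
    rw [Complex.ext_iff] at h
    simp at h
    exact ha.ne' h.1
  have hden : ((↑a : ℂ) - ↑n*I) * (↑a + ↑n*I) = (((a:ℝ)^2 + (n:ℝ)^2 : ℝ) : ℂ) := by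
    push_cast
    linear_combination (-(↑n:ℂ)^2) * Complex.I_sq
  have hd : ((a:ℝ)^2 + (n:ℝ)^2) ≠ 0 := by positivity
  have hdc : (((a:ℝ)^2 + (n:ℝ)^2 : ℝ) : ℂ) ≠ 0 := by exact_mod_cast hd
  have hpi : (π:ℝ) ≠ 0 := Real.pi_ne_zero
  have e1c : Complex.exp (-(↑a*↑π))/2 * ((↑(Real.exp (2*π*a)) : ℂ) - 1) = (↑S : ℂ) := by
    rw [hc1, h2a, hsinh]
    push_cast
    field_simp
  have e2c : Complex.exp (↑a*↑π)/2 * ((↑(Real.exp (2*π*(-a))) : ℂ) - 1) = -(↑S : ℂ) := by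
    rw [hc2, hm2a, hsinh]
    push_cast
    field_simp
    ring
  have hm : (-(↑a:ℂ) - ↑n*I) = -((↑a:ℂ) + ↑n*I) := by ring
  calc (1 / (2*π) : ℝ) •
        (Complex.exp (-(↑a*↑π))/2 * ((↑(Real.exp (2*π*a)) - 1) / (↑a - ↑n*I))
          + Complex.exp (↑a*↑π)/2 * ((↑(Real.exp (2*π*(-a))) - 1) / (-↑a - ↑n*I)))
      = (1 / (2*π) : ℝ) • ((↑S:ℂ)/(↑a - ↑n*I) + (↑S:ℂ)/(↑a + ↑n*I)) := by
        rw [hm, div_neg, mul_neg, ← mul_div_assoc, ← mul_div_assoc, e1c, e2c]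
        congr 1
        ring
    _ = (1 / (2*π) : ℝ) • (((↑S:ℂ)*(↑a + ↑n*I) + (↑a - ↑n*I)*(↑S:ℂ))/(((a:ℝ)^2 + (n:ℝ)^2 : ℝ) : ℂ)) := by
        rw [div_add_div _ _ hz1 hz2, hden]
    _ = ((a * S / π / (a^2 + (n:ℝ)^2) : ℝ) : ℂ) := by
        have hnum : ((↑S:ℂ)*(↑a + ↑n*I) + (↑a - ↑n*I)*(↑S:ℂ)) = ((2*a*S : ℝ) : ℂ) := by
          push_cast; ring
        rw [Complex.real_smul, hnum, ← Complex.ofReal_div, ← Complex.ofReal_mul,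
          Complex.ofReal_inj]
        field_simp

lemma summable_inv_sq_add (a : ℝ) (ha : 0 < a) :
    Summable (fun n : ℤ => 1/(a^2+(n:ℝ)^2)) := by
  have key : Summable (fun n : ℕ => 1/(a^2+(n:ℝ)^2)) := by
    have hc : Summable (fun n : ℕ => (2+2/a^2) * (1/((n:ℝ)+1)^2)) := by
      apply Summable.mul_left
      have := (summable_nat_add_iff (f := fun n : ℕ => 1/((n:ℝ))^2) 1).mpr
        (summable_one_div_nat_pow.mpr one_lt_two)
      apply this.congr
      intro n
      push_cast
      ring
    apply Summable.of_nonneg_of_le (fun n => by positivity) (fun n => ?_) hc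
    have h1 : (2/a^2) * a^2 = 2 := by field_simp
    have h2 : (0:ℝ) ≤ 2/a^2 * (n:ℝ)^2 := by positivity
    rw [mul_one_div, div_le_div_iff₀ (by positivity) (by positivity), one_mul]
    nlinarith [sq_nonneg ((n:ℝ) - 1)]
  apply Summable.of_nat_of_neg
  · exact key.congr (by intro n; norm_num)
  · apply key.congr
    intro n
    push_cast
    norm_num

lemma hasSum_int_cosh (a : ℝ) (ha : 0 < a) :
    HasSum (fun n : ℤ => a * Real.sinh (a*π) / π / (a^2 + (n:ℝ)^2)) (Real.cosh (a*π)) := by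
  set g : ℝ → ℂ := fun x => (Real.cosh (a*(x-π)) : ℂ) with hg
  have hcont : Continuous (AddCircle.liftIco (2*π) 0 g) := by
    apply AddCircle.liftIco_continuous
    · show (↑(Real.cosh (a*(0-π))):ℂ) = ↑(Real.cosh (a*((0+2*π)-π)))
      rw [show a*(0-π) = -(a*((0+2*π)-π)) by ring, Real.cosh_neg]
    · exact (Complex.continuous_ofReal.comp
        (Real.continuous_cosh.comp (by continuity))).continuousOn
  set F : C(AddCircle (2*π), ℂ) := ⟨_, hcont⟩ with hF
  have hcoeff : ∀ n : ℤ, fourierCoeff (⇑F) n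
      = ((a * Real.sinh (a*π) / π / (a^2 + (n:ℝ)^2) : ℝ) : ℂ) := fun n =>
    fourierCoeff_cosh a ha n
  have hsummable : Summable (fourierCoeff (⇑F)) := by
    rw [funext hcoeff]
    rw [Complex.summable_ofReal]
    apply ((summable_inv_sq_add a ha).mul_left (a * Real.sinh (a*π) / π)).congr
    intro n
    rw [mul_one_div]
  have hps := has_pointwise_sum_fourier_series_of_summable hsummable (0 : AddCircle (2*π))
  have hF0 : F (0 : AddCircle (2*π)) = (Real.cosh (a*π) : ℂ) := by
    show AddCircle.liftIco (2*π) 0 g ((0:ℝ) : AddCircle (2*π)) = _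
    rw [AddCircle.liftIco_coe_apply (by constructor <;> [rfl; positivity])]
    simp only [hg]
    rw [show a*(0-π) = -(a*π) by ring, Real.cosh_neg]
  rw [hF0] at hps
  rw [← Complex.hasSum_ofReal]
  apply hps.congr_fun
  intro n
  rw [hcoeff n, fourier_eval_zero, smul_eq_mul, mul_one]

lemma hasSum_coth (s : ℝ) (hs : 0 < s) :
    HasSum (fun n : ℕ => 2*s/(s^2+((n:ℝ)+1)^2*π^2)) (coth s - 1/s) := by
  have hpi : (0:ℝ) < π := Real.pi_pos
  have ha : 0 < s/π := by positivity
  have hsinh : 0 < Real.sinh s := Real.sinh_pos_iff.mpr hs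
  have h := hasSum_int_cosh (s/π) ha
  rw [show s/π*π = s by field_simp] at h
  set f : ℤ → ℝ := fun n => s/π * Real.sinh s / π / ((s/π)^2 + (n:ℝ)^2) with hf
  have h1 : HasSum (fun n : ℕ => f n + f (-n)) (Real.cosh s + f 0) := h.nat_add_neg
  have h2 : HasSum (fun n : ℕ => f (n+1) + f (-(n+1)))
      ((Real.cosh s + f 0) - ∑ i ∈ Finset.range 1, (f i + f (-i))) :=
    (hasSum_nat_add_iff' (f := fun n : ℕ => f n + f (-n)) 1).mpr (by push_cast; exact h1)
  have h3 := h2.div_const (Real.sinh s)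
  have hval : ((Real.cosh s + f 0) - ∑ i ∈ Finset.range 1, (f (i:ℕ) + f (-(i:ℕ)))) / Real.sinh s
      = coth s - 1/s := by
    simp only [hf, Finset.sum_range_one, Nat.cast_zero, neg_zero, coth]
    field_simp
    ring
  rw [hval] at h3
  apply h3.congr_fun
  intro n
  simp only [hf]
  have hd : (s/π)^2 + ((n:ℝ)+1)^2 > 0 := by positivity
  push_cast
  have hd2 : (s/π)^2 + (-((n:ℝ)+1))^2 > 0 := by positivity
  rw [div_add_div _ _ hd.ne' hd2.ne']
  field_simp
  ring

/-- The summand. -/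
noncomputable def gfun (n : ℕ) (s : ℝ) : ℝ :=
  2/(((n:ℝ)+1)^4*π^4*(s^2+((n:ℝ)+1)^2*π^2))

lemma hasSum_gfun (s : ℝ) (hs : 0 < s) :
    HasSum (fun n : ℕ => gfun n s)
      ((s:ℝ)^(-5:ℤ) * (coth s - 1/s - s/3 + s^3/45)) := by
  have hpi : (0:ℝ) < π := Real.pi_pos
  have h1 := hasSum_coth s hs
  have hz2 : HasSum (fun n : ℕ => 1/((n:ℝ)+1)^2) (π^2/6) := by
    have := (hasSum_nat_add_iff' (f := fun n : ℕ => 1/((n:ℝ))^2) 1).mpr hasSum_zeta_two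
    simp only [Finset.sum_range_one, Nat.cast_zero] at this
    norm_num at this
    exact this.congr_fun (by intro n; push_cast; norm_num)
  have hz4 : HasSum (fun n : ℕ => 1/((n:ℝ)+1)^4) (π^4/90) := by
    have := (hasSum_nat_add_iff' (f := fun n : ℕ => 1/((n:ℝ))^4) 1).mpr hasSum_zeta_four
    simp only [Finset.sum_range_one, Nat.cast_zero] at this
    norm_num at this
    exact this.congr_fun (by intro n; push_cast; norm_num)
  have h2 : HasSum (fun n : ℕ => 2*s/(((n:ℝ)+1)^2*π^2)) (s/3) := by
    have := hz2.mul_left (2*s/π^2)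
    rw [show 2*s/π^2*(π^2/6) = s/3 by field_simp; ring] at this
    exact this.congr_fun (by intro n; field_simp)
  have h3 : HasSum (fun n : ℕ => 2*s^3/(((n:ℝ)+1)^4*π^4)) (s^3/45) := by
    have := hz4.mul_left (2*s^3/π^4)
    rw [show 2*s^3/π^4*(π^4/90) = s^3/45 by field_simp; ring] at this
    exact this.congr_fun (by intro n; field_simp)
  have h := ((h1.sub h2).add h3).mul_left ((s:ℝ)^(-5:ℤ))
  apply h.congr_fun
  intro n
  have hc : (0:ℝ) < ((n:ℝ)+1)^2*π^2 := by positivity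
  have hne : ((n:ℝ)+1) ≠ 0 := by positivity
  have hzz : (s:ℝ)^(-5:ℤ) = (s^5)⁻¹ := by
    rw [zpow_neg]
    norm_num
  rw [gfun, hzz]
  have hd1 : s^2+((n:ℝ)+1)^2*π^2 > 0 := by positivity
  field_simp
  ring

lemma integrableOn_inv_sq_add (c : ℝ) (hc : 0 < c) :
    IntegrableOn (fun s : ℝ => (s^2+c^2)⁻¹) (Set.Ioi 0) := by
  have h1 : Integrable (fun x : ℝ => (1+(c⁻¹*x)^2)⁻¹) :=
    integrable_inv_one_add_sq.comp_mul_left' (by positivity : c⁻¹ ≠ 0)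
  have h2 := (h1.const_mul (c⁻¹*c⁻¹)).integrableOn (s := Set.Ioi 0)
  apply h2.congr_fun ?_ measurableSet_Ioi
  intro s _
  field_simp
  ring

lemma integral_inv_sq_add (c : ℝ) (hc : 0 < c) :
    ∫ s in Set.Ioi (0:ℝ), (s^2+c^2)⁻¹ = π/(2*c) := by
  have key := integral_comp_mul_left_Ioi (fun x : ℝ => (1+x^2)⁻¹) 0 (inv_pos.mpr hc)
  simp only [mul_zero, integral_Ioi_inv_one_add_sq, arctan_zero, sub_zero, inv_inv,
    smul_eq_mul] at key
  have hfun : (fun s : ℝ => (s^2+c^2)⁻¹) = (fun s : ℝ => c⁻¹*c⁻¹*(1+(c⁻¹*s)^2)⁻¹) := by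
    funext s
    field_simp
    ring
  rw [hfun, MeasureTheory.integral_const_mul, key]
  field_simp

lemma gfun_eq (n : ℕ) :
    gfun n = fun s : ℝ => (2/(((n:ℝ)+1)^4*π^4)) * (s^2+(((n:ℝ)+1)*π)^2)⁻¹ := by
  funext s
  have hpi : (0:ℝ) < π := Real.pi_pos
  rw [gfun]
  rw [mul_pow]
  field_simp

lemma integrableOn_gfun (n : ℕ) : IntegrableOn (gfun n) (Set.Ioi 0) := by
  rw [gfun_eq]
  exact (integrableOn_inv_sq_add (((n:ℝ)+1)*π) (by positivity)).const_mul _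

lemma integral_gfun (n : ℕ) :
    ∫ s in Set.Ioi (0:ℝ), gfun n s = 1/(((n:ℝ)+1)^5*π^4) := by
  have hpi : (0:ℝ) < π := Real.pi_pos
  rw [gfun_eq]
  rw [MeasureTheory.integral_const_mul, integral_inv_sq_add (((n:ℝ)+1)*π) (by positivity)]
  have hne : ((n:ℝ)+1) ≠ 0 := by positivity
  field_simp

lemma summable_vals : Summable (fun n : ℕ => 1/(((n:ℝ)+1)^5*π^4)) := by
  have h5 : Summable (fun n : ℕ => 1/((n:ℝ)+1)^5) := by
    have := (summable_nat_add_iff (f := fun n : ℕ => 1/((n:ℝ))^5) 1).mpr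
      (summable_one_div_nat_pow.mpr (by norm_num))
    apply this.congr
    intro n
    push_cast
    ring
  apply (h5.div_const (π^4)).congr
  intro n
  rw [div_div]

lemma integral_eq_tsum :
    (∫ s in Set.Ioi (0:ℝ), (s:ℝ)^(-5:ℤ) * (coth s - 1/s - s/3 + s^3/45))
      = (∑' n : ℕ, 1/((n:ℝ)+1)^5)/π^4 := by
  have hpi : (0:ℝ) < π := Real.pi_pos
  have hswap : ∑' n : ℕ, ∫ s in Set.Ioi (0:ℝ), gfun n s
      = ∫ s in Set.Ioi (0:ℝ), ∑' n : ℕ, gfun n s := by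
    apply integral_tsum_of_summable_integral_norm
    · exact fun n => integrableOn_gfun n
    · apply Summable.congr summable_vals
      intro n
      rw [← integral_gfun n]
      apply setIntegral_congr_fun measurableSet_Ioi
      intro s _
      show gfun n s = ‖gfun n s‖
      rw [Real.norm_eq_abs, _root_.abs_of_nonneg]
      rw [gfun]
      positivity
  have h1 : (∫ s in Set.Ioi (0:ℝ), (s:ℝ)^(-5:ℤ) * (coth s - 1/s - s/3 + s^3/45))
      = ∫ s in Set.Ioi (0:ℝ), ∑' n : ℕ, gfun n s := by
    apply setIntegral_congr_fun measurableSet_Ioi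
    intro s hs
    exact ((hasSum_gfun s hs).tsum_eq).symm
  rw [h1, ← hswap]
  rw [tsum_congr (fun n => integral_gfun n)]
  rw [← tsum_div_const]
  apply tsum_congr
  intro n
  rw [div_div]

end ZetaFiveAux

/-- `ζ(5) = π⁴ ∫₀^∞ s^{-5}(coth s − 1/s − s/3 + s³/45) ds`. -/
theorem zeta_five_integral_coth :
    riemannZeta 5 = (Real.pi : ℂ) ^ 4 *
      ((∫ s in Set.Ioi (0 : ℝ), s ^ (-5 : ℤ) * (coth s - 1 / s - s / 3 + s ^ 3 / 45) : ℝ) : ℂ) := by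
  have hpi : (0:ℝ) < π := Real.pi_pos
  rw [ZetaFiveAux.integral_eq_tsum]
  have hz : riemannZeta 5 = ∑' n : ℕ, 1/((n:ℂ)+1)^5 := by
    rw [zeta_eq_tsum_one_div_nat_add_one_cpow (by norm_num)]
    apply tsum_congr
    intro n
    congr 1
    rw [show (5:ℂ) = ((5:ℕ):ℂ) by norm_num, Complex.cpow_natCast]
  rw [hz]
  have hc : ∑' n : ℕ, 1/((n:ℂ)+1)^5 = ((∑' n : ℕ, 1/((n:ℝ)+1)^5 : ℝ) : ℂ) := by
    rw [Complex.ofReal_tsum]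
    apply tsum_congr
    intro n
    push_cast
    ring
  rw [hc]
  rw [← Complex.ofReal_pow, ← Complex.ofReal_mul, Complex.ofReal_inj]
  field_simp
end

section
/- ζ(3) = −3π² · ∫₀^∞ s^{−4} ( ln(sinh(s)/s) − s²/6 ) ds, where the integral is over real s ∈ (0,∞). -/
open Real MeasureTheory Filter Set Topology

noncomputable def Gc (c s : ℝ) : ℝ :=
  -(Real.log (1 + s^2/c^2) - s^2/c^2)/(3*s^3) - 2/(3*c^3) * Real.arctan (s/c)

lemma log_one_add_le {x : ℝ} (hx : 0 ≤ x) : Real.log (1 + x) ≤ x := by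
  have := Real.log_le_sub_one_of_pos (x := 1 + x) (by linarith)
  linarith

lemma log_one_add_nonneg {x : ℝ} (hx : 0 ≤ x) : 0 ≤ Real.log (1 + x) :=
  Real.log_nonneg (by linarith)

lemma sub_log_one_add_le {x : ℝ} (hx : 0 ≤ x) : x - Real.log (1 + x) ≤ x ^ 2 := by
  have h1 : (0:ℝ) < 1 + x := by linarith
  have h2 := Real.log_le_sub_one_of_pos (x := (1 + x)⁻¹) (by positivity)
  rw [Real.log_inv] at h2
  have h3 : x / (1 + x) ≤ Real.log (1 + x) := by
    have he : (1+x)⁻¹ - 1 = -(x/(1+x)) := by field_simp; ring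
    linarith [he ▸ h2]
  have h4 : x - x / (1+x) = x^2/(1+x) := by field_simp; ring
  have h5 : x^2/(1+x) ≤ x^2 := div_le_self (by positivity) (by linarith)
  linarith

lemma Gc_zero (c : ℝ) : Gc c 0 = 0 := by
  simp [Gc]

lemma Gc_continuousWithinAt {c : ℝ} (hc : 0 < c) :
    ContinuousWithinAt (Gc c) (Ici 0) 0 := by
  rw [ContinuousWithinAt, Gc_zero]
  have hB : Tendsto (fun s : ℝ => 2/(3*c^3) * Real.arctan (s/c)) (𝓝[Ici 0] 0) (𝓝 0) := by
    have : Continuous (fun s : ℝ => 2/(3*c^3) * Real.arctan (s/c)) := by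
      continuity
    have h := (this.tendsto 0).mono_left (nhdsWithin_le_nhds (s := Ici (0:ℝ)))
    simpa using h
  have hA : Tendsto (fun s : ℝ => -(Real.log (1 + s^2/c^2) - s^2/c^2)/(3*s^3)) (𝓝[Ici 0] 0)
      (𝓝 0) := by
    refine squeeze_zero_norm' (a := fun s => s/(3*c^4)) ?_ ?_
    · filter_upwards [self_mem_nhdsWithin] with s (hs : 0 ≤ s)
      rcases eq_or_lt_of_le hs with rfl | hs'
      · simp
      have hx : 0 ≤ s^2/c^2 := by positivity
      have h1 : 0 ≤ s^2/c^2 - Real.log (1 + s^2/c^2) := by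
        have := log_one_add_le hx; linarith
      have h2 : s^2/c^2 - Real.log (1 + s^2/c^2) ≤ (s^2/c^2)^2 := sub_log_one_add_le hx
      rw [Real.norm_eq_abs, abs_div, abs_of_nonneg (by positivity : (0:ℝ) ≤ 3*s^3),
        neg_sub, abs_of_nonneg h1]
      rw [div_le_div_iff₀ (by positivity) (by positivity)]
      calc (s^2/c^2 - Real.log (1 + s^2/c^2)) * (3*c^4) ≤ (s^2/c^2)^2 * (3*c^4) := by
            apply mul_le_mul_of_nonneg_right h2 (by positivity)
        _ = s * (3*s^3) := by field_simp
    · have : Continuous (fun s : ℝ => s/(3*c^4)) := by continuity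
      have h := (this.tendsto 0).mono_left (nhdsWithin_le_nhds (s := Ici (0:ℝ)))
      simpa using h
  have := hA.sub hB
  have h' : Tendsto (fun s : ℝ => -(Real.log (1 + s^2/c^2) - s^2/c^2)/(3*s^3)
      - 2/(3*c^3) * Real.arctan (s/c)) (𝓝[Ici 0] 0) (𝓝 0) := by simpa using this
  exact h'
lemma hasDerivAt_Gc {c s : ℝ} (hc : 0 < c) (hs : 0 < s) :
    HasDerivAt (Gc c) ((s:ℝ)^(-4:ℤ) * (Real.log (1 + s^2/c^2) - s^2/c^2)) s := by
  have hden : (0:ℝ) < 1 + s^2/c^2 := by positivity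
  have h1 : HasDerivAt (fun t : ℝ => 1 + t^2/c^2) (2*s/c^2) s := by
    simpa using ((hasDerivAt_pow 2 s).div_const (c^2)).const_add 1
  have hL : HasDerivAt (fun t : ℝ => Real.log (1 + t^2/c^2)) ((2*s/c^2)/(1 + s^2/c^2)) s :=
    h1.log hden.ne'
  have hnum : HasDerivAt (fun t : ℝ => -(Real.log (1 + t^2/c^2) - t^2/c^2))
      (-((2*s/c^2)/(1 + s^2/c^2) - 2*s/c^2)) s := by
    exact (hL.sub (by simpa using (hasDerivAt_pow 2 s).div_const (c^2))).neg
  have hcube : HasDerivAt (fun t : ℝ => 3*t^3) (3*(3*s^2)) s := by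
    simpa using ((hasDerivAt_pow 3 s).const_mul 3)
  have hq : HasDerivAt (fun t : ℝ => -(Real.log (1 + t^2/c^2) - t^2/c^2)/(3*t^3))
      (((-((2*s/c^2)/(1 + s^2/c^2) - 2*s/c^2)) * (3*s^3) -
        (-(Real.log (1 + s^2/c^2) - s^2/c^2)) * (3*(3*s^2))) / (3*s^3)^2) s :=
    hnum.div hcube (by positivity)
  have harc : HasDerivAt (fun t : ℝ => 2/(3*c^3) * Real.arctan (t/c))
      (2/(3*c^3) * ((1/(1+(s/c)^2)) * (1/c))) s := by
    have := (Real.hasDerivAt_arctan (s/c)).comp s ((hasDerivAt_id s).div_const c)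
    simpa using this.const_mul (2/(3*c^3))
  have := hq.sub harc
  convert this using 1
  · rfl
  · rfl
  · rfl
  have hs4 : (s:ℝ)^(-4:ℤ) = (s^4)⁻¹ := by
    rw [zpow_neg]; norm_cast
  rw [hs4]
  field_simp
  ring
lemma Gc_tendsto_atTop {c : ℝ} (hc : 0 < c) :
    Tendsto (Gc c) atTop (𝓝 (-π/(3*c^3))) := by
  have hA : Tendsto (fun s : ℝ => -(Real.log (1 + s^2/c^2) - s^2/c^2)/(3*s^3)) atTop (𝓝 0) := by
    have h1 : Tendsto (fun s : ℝ => Real.log (1 + s^2/c^2)/(3*s^3)) atTop (𝓝 0) := by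
      have hb : Tendsto (fun s : ℝ => s^2/c^2/(3*s^3)) atTop (𝓝 0) := by
        have : (fun s : ℝ => s^2/c^2/(3*s^3)) =ᶠ[atTop] fun s => (3*c^2)⁻¹ * s⁻¹ := by
          filter_upwards [eventually_gt_atTop (0:ℝ)] with s hs
          field_simp
        rw [tendsto_congr' this]
        have := tendsto_inv_atTop_zero.const_mul (((3*c^2):ℝ)⁻¹)
        rwa [mul_zero] at this
      apply squeeze_zero' (g := fun s => s^2/c^2/(3*s^3))
      · filter_upwards [eventually_gt_atTop (0:ℝ)] with s hs
        exact div_nonneg (log_one_add_nonneg (by positivity)) (by positivity)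
      · filter_upwards [eventually_gt_atTop (0:ℝ)] with s hs
        exact div_le_div_of_nonneg_right (log_one_add_le (by positivity)) (by positivity) |>.trans_eq rfl
      · exact hb
    have h2 : Tendsto (fun s : ℝ => (s^2/c^2)/(3*s^3)) atTop (𝓝 0) := by
      have : (fun s : ℝ => s^2/c^2/(3*s^3)) =ᶠ[atTop] fun s => (3*c^2)⁻¹ * s⁻¹ := by
        filter_upwards [eventually_gt_atTop (0:ℝ)] with s hs
        field_simp
      rw [tendsto_congr' this]
      have := tendsto_inv_atTop_zero.const_mul (((3*c^2):ℝ)⁻¹)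
      rwa [mul_zero] at this
    have := (h2.sub h1)
    simp only [neg_div, neg_sub]
    simpa [sub_div] using this
  have hB : Tendsto (fun s : ℝ => 2/(3*c^3) * Real.arctan (s/c)) atTop (𝓝 (2/(3*c^3) * (π/2))) := by
    have h1 : Tendsto (fun s : ℝ => s/c) atTop atTop := tendsto_id.atTop_div_const hc
    have h2 : Tendsto (fun s : ℝ => Real.arctan (s/c)) atTop (𝓝 (π/2)) :=
      (Real.tendsto_arctan_atTop.mono_right nhdsWithin_le_nhds).comp h1
    exact h2.const_mul _
  have := hA.sub hB
  simp only [zero_sub] at this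
  convert this using 2
  · rfl
  ring

lemma key_integral_s16 {c : ℝ} (hc : 0 < c) :
    IntegrableOn (fun s : ℝ => s^(-4:ℤ) * (Real.log (1 + s^2/c^2) - s^2/c^2)) (Ioi 0) ∧
    ∫ s in Ioi 0, s^(-4:ℤ) * (Real.log (1 + s^2/c^2) - s^2/c^2) = -π/(3*c^3) := by
  have hderiv : ∀ x ∈ Ioi (0:ℝ),
      HasDerivAt (Gc c) (x^(-4:ℤ) * (Real.log (1 + x^2/c^2) - x^2/c^2)) x :=
    fun x hx => hasDerivAt_Gc hc hx
  have hneg : ∀ x ∈ Ioi (0:ℝ), x^(-4:ℤ) * (Real.log (1 + x^2/c^2) - x^2/c^2) ≤ 0 := by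
    intro x hx
    have hx' : (0:ℝ) < x := hx
    have h1 : (0:ℝ) ≤ x^(-4:ℤ) := by positivity
    have h2 : Real.log (1 + x^2/c^2) - x^2/c^2 ≤ 0 := by
      have := log_one_add_le (x := x^2/c^2) (by positivity); linarith
    exact mul_nonpos_of_nonneg_of_nonpos h1 h2
  have hcont := Gc_continuousWithinAt hc
  have htend := Gc_tendsto_atTop hc
  refine ⟨integrableOn_Ioi_deriv_of_nonpos hcont hderiv hneg htend, ?_⟩
  rw [integral_Ioi_of_hasDerivAt_of_nonpos hcont hderiv hneg htend, Gc_zero, sub_zero]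
lemma hasSum_inv_sq : HasSum (fun k : ℕ => 1/((k:ℝ)+1)^2) (π^2/6) := by
  have h0 := hasSum_zeta_two
  have h1 := (hasSum_nat_add_iff' (f := fun n : ℕ => 1/(n:ℝ)^2) 1).mpr h0
  have h2 : (fun n : ℕ => 1/((n+1:ℕ):ℝ)^2) = fun k : ℕ => 1/((k:ℝ)+1)^2 := by
    funext k; push_cast; ring
  simp only [Finset.range_one, Finset.sum_singleton, Nat.cast_zero] at h1
  norm_num at h1
  convert h1 using 2 with k
  · rfl
  push_cast; ring

lemma hasSum_sq_term {s : ℝ} :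
    HasSum (fun k : ℕ => s^2/(((k:ℝ)+1)*π)^2) (s^2/6) := by
  have h := hasSum_inv_sq.mul_left (s^2/π^2)
  have hπ := Real.pi_ne_zero
  have h3 : s^2/π^2 * (π^2/6) = s^2/6 := by field_simp
  rw [h3] at h
  have h2 : (fun k : ℕ => s^2/π^2 * (1/((k:ℝ)+1)^2)) = fun k : ℕ => s^2/(((k:ℝ)+1)*π)^2 := by
    funext k
    rw [mul_one_div, div_div, mul_pow, mul_comm (π^2)]
  rwa [h2] at h

lemma hasSum_log_sinh {s : ℝ} (hs : 0 < s) :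
    HasSum (fun k : ℕ => Real.log (1 + s^2/(((k:ℝ)+1)*π)^2)) (Real.log (Real.sinh s / s)) := by
  have hπ := Real.pi_pos
  set a : ℕ → ℝ := fun k => Real.log (1 + s^2/(((k:ℝ)+1)*π)^2) with ha_def
  have hpos : ∀ k : ℕ, (0:ℝ) < 1 + s^2/(((k:ℝ)+1)*π)^2 := by
    intro k; positivity
  have hann : ∀ k, 0 ≤ a k := fun k => Real.log_nonneg (le_add_of_nonneg_right (by positivity))
  have hsumm : Summable a := by
    refine Summable.of_nonneg_of_le hann (fun k => ?_) (hasSum_inv_sq.summable.mul_left (s^2/π^2))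
    have h1 := log_one_add_le (x := s^2/(((k:ℝ)+1)*π)^2) (by positivity)
    have hk : ((k:ℝ)+1) ≠ 0 := by positivity
    have h2 : s^2/(((k:ℝ)+1)*π)^2 = s^2/π^2 * (1/((k:ℝ)+1)^2) := by
      rw [mul_one_div, div_div, mul_pow, mul_comm (π^2)]
    rw [ha_def]
    simp only []
    linarith [h2 ▸ h1]
  set P : ℕ → ℝ := fun n => ∏ j ∈ Finset.range n, (1 + s^2/(((j:ℝ)+1)*π)^2) with hP_def
  have hPpos : ∀ n, 0 < P n := fun n => Finset.prod_pos fun j _ => hpos j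
  have heuler : Tendsto (fun n => s * P n) atTop (𝓝 (Real.sinh s)) := by
    have h := Complex.tendsto_euler_sin_prod ((s/π) * Complex.I)
    have hπc : (π:ℂ) ≠ 0 := Complex.ofReal_ne_zero.mpr Real.pi_ne_zero
    have hz : (π : ℂ) * (((s:ℂ)/(π:ℂ)) * Complex.I) = (s:ℂ) * Complex.I := by
      field_simp
    rw [hz, Complex.sin_mul_I] at h
    have hfn : ∀ n : ℕ, (s:ℂ) * Complex.I *
        ∏ j ∈ Finset.range n, (1 - (((s:ℂ)/(π:ℂ)) * Complex.I)^2 / ((j:ℂ)+1)^2)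
        = ((s * P n : ℝ) : ℂ) * Complex.I := by
      intro n
      have hprod : ∀ j : ℕ, (1 - (((s:ℂ)/(π:ℂ)) * Complex.I)^2 / ((j:ℂ)+1)^2)
          = ((1 + s^2/(((j:ℝ)+1)*π)^2 : ℝ) : ℂ) := by
        intro j
        have hj : ((j:ℂ)+1) ≠ 0 := by exact_mod_cast Nat.succ_ne_zero j
        push_cast
        rw [mul_pow, Complex.I_sq]
        field_simp
        ring
      simp_rw [hprod]
      rw [hP_def]
      push_cast
      ring
    simp_rw [hfn] at h
    have him : Tendsto (fun n => (((s * P n : ℝ) : ℂ) * Complex.I).im) atTop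
        (𝓝 ((Complex.sinh (s:ℂ) * Complex.I).im)) := (Complex.continuous_im.tendsto _).comp h
    have h2 : (Complex.sinh (s:ℂ) * Complex.I).im = Real.sinh s := by
      simp [Complex.mul_I_im, Complex.sinh_ofReal_re]
    rw [h2] at him
    simpa [Complex.mul_I_im] using him
  have hPlim : Tendsto P atTop (𝓝 (Real.sinh s / s)) := by
    have := heuler.div_const s
    simpa [mul_div_assoc, mul_div_cancel_left₀ _ hs.ne'] using this
  have hlogP : ∀ n, Real.log (P n) = ∑ j ∈ Finset.range n, a j := by
    intro n
    rw [hP_def]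
    exact Real.log_prod fun j _ => (hpos j).ne'
  have hsinh : 0 < Real.sinh s / s := div_pos (Real.sinh_pos_iff.mpr hs) hs
  have hloglim : Tendsto (fun n => Real.log (P n)) atTop (𝓝 (Real.log (Real.sinh s / s))) :=
    ((Real.continuousAt_log hsinh.ne').tendsto).comp hPlim
  have hsumlim : Tendsto (fun n => ∑ j ∈ Finset.range n, a j) atTop
      (𝓝 (Real.log (Real.sinh s / s))) := by
    simpa [hlogP] using hloglim
  have := tendsto_nhds_unique hsumm.hasSum.tendsto_sum_nat hsumlim
  exact this ▸ hsumm.hasSum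

lemma summable_inv_cube : Summable (fun k : ℕ => 1/((k:ℝ)+1)^3) := by
  have h := summable_one_div_nat_pow.mpr (by norm_num : 1 < 3)
  have h2 := (summable_nat_add_iff 1).mpr h
  convert h2 using 2 with k
  · rfl
  push_cast
  ring

/-- `ζ(3) = −3π² ∫₀^∞ s^{-4}(ln(sinh s / s) − s²/6) ds`. -/
theorem zeta_three_integral_log_sinh :
    riemannZeta 3 = -3 * (Real.pi : ℂ) ^ 2 *
      ((∫ s in Set.Ioi (0 : ℝ), s ^ (-4 : ℤ) *
        (Real.log (Real.sinh s / s) - s ^ 2 / 6) : ℝ) : ℂ) := by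
  have hπ := Real.pi_pos
  set c : ℕ → ℝ := fun k => ((k:ℝ)+1)*π with hc_def
  have hcpos : ∀ k, 0 < c k := fun k => by positivity
  set F : ℕ → ℝ → ℝ := fun k s => s^(-4:ℤ) * (Real.log (1 + s^2/(c k)^2) - s^2/(c k)^2)
    with hF_def
  have hkey : ∀ k, IntegrableOn (F k) (Ioi 0) ∧
      ∫ s in Ioi 0, F k s = -π/(3*(c k)^3) := fun k => key_integral_s16 (hcpos k)
  -- pointwise identity
  have hpt : ∀ s ∈ Ioi (0:ℝ),
      s ^ (-4 : ℤ) * (Real.log (Real.sinh s / s) - s ^ 2 / 6) = ∑' k, F k s := by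
    intro s hs
    have h1 := (hasSum_log_sinh hs).sub (hasSum_sq_term (s := s))
    have h2 := h1.mul_left ((s:ℝ)^(-4:ℤ))
    exact h2.tsum_eq.symm
  -- swap integral and sum
  have hswap : ∫ s in Ioi (0:ℝ), s ^ (-4 : ℤ) * (Real.log (Real.sinh s / s) - s ^ 2 / 6)
      = ∑' k, ∫ s in Ioi (0:ℝ), F k s := by
    rw [setIntegral_congr_fun measurableSet_Ioi hpt]
    apply integral_tsum
    · exact fun k => ((hkey k).1).aestronglyMeasurable
    · have hnorm : ∀ k, ∫⁻ s in Ioi (0:ℝ), ‖F k s‖ₑ = ENNReal.ofReal (π/(3*(c k)^3)) := by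
        intro k
        rw [← ofReal_integral_norm_eq_lintegral_enorm (hkey k).1]
        congr 1
        have : ∀ x ∈ Ioi (0:ℝ), ‖F k x‖ = - F k x := by
          intro x hx
          rw [Real.norm_eq_abs, abs_of_nonpos]
          have h1 : (0:ℝ) ≤ (x:ℝ)^(-4:ℤ) := by positivity
          have h2 : Real.log (1 + x^2/(c k)^2) - x^2/(c k)^2 ≤ 0 := by
            have := log_one_add_le (x := x^2/(c k)^2) (by positivity); linarith
          exact mul_nonpos_of_nonneg_of_nonpos h1 h2
        rw [setIntegral_congr_fun measurableSet_Ioi this, integral_neg, (hkey k).2]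
        ring
      simp_rw [hnorm]
      rw [← ENNReal.ofReal_tsum_of_nonneg (fun k => by positivity)]
      · exact ENNReal.ofReal_ne_top
      · have : ∀ k : ℕ, π/(3*(c k)^3) = 1/(3*π^2) * (1/((k:ℝ)+1)^3) := by
          intro k
          rw [hc_def]
          have hk : ((k:ℝ)+1) ≠ 0 := by positivity
          field_simp
        simp_rw [this]
        exact summable_inv_cube.mul_left _
  -- evaluate the sum
  have hval : ∑' k, ∫ s in Ioi (0:ℝ), F k s
      = -(1/(3*π^2)) * ∑' k : ℕ, 1/((k:ℝ)+1)^3 := by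
    have h1 : ∀ k : ℕ, ∫ s in Ioi (0:ℝ), F k s = -(1/(3*π^2)) * (1/((k:ℝ)+1)^3) := by
      intro k
      rw [(hkey k).2, hc_def]
      have hk : ((k:ℝ)+1) ≠ 0 := by positivity
      field_simp
    simp_rw [h1]
    exact (summable_inv_cube.hasSum.mul_left _).tsum_eq
  -- zeta side
  have hzeta : riemannZeta 3 = ((∑' k : ℕ, 1/((k:ℝ)+1)^3 : ℝ) : ℂ) := by
    rw [zeta_eq_tsum_one_div_nat_add_one_cpow (by norm_num)]
    rw [Complex.ofReal_tsum]
    congr 1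
    funext k
    have : ((k:ℂ)+1) ^ (3:ℂ) = ((k:ℂ)+1) ^ (3:ℕ) := by
      rw [show (3:ℂ) = ((3:ℕ):ℂ) by norm_num, Complex.cpow_natCast]
    push_cast [this]
    ring
  rw [hswap, hval, hzeta]
  have hπc : (π:ℂ) ≠ 0 := Complex.ofReal_ne_zero.mpr Real.pi_ne_zero
  push_cast
  field_simp
end

section
/- ζ(5) = 5π⁴ · ∫₀^∞ s^{−6} ( ln(sinh(s)/s) − s²/6 + s⁴/180 ) ds, where the integral is over real s ∈ (0,∞). -/
open Real MeasureTheory Set Filter Topology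

namespace ZetaFive

noncomputable def Gf (t : ℝ) : ℝ := Real.log (1 + t^2) - t^2 + t^4/2

noncomputable def Ff (t : ℝ) : ℝ := 2/5 * Real.arctan t - 1/5 * (Gf t / t^5)

lemma one_add_sq_pos (t : ℝ) : 0 < 1 + t^2 := by positivity

lemma Gf_hasDerivAt (t : ℝ) : HasDerivAt Gf (2*t^5/(1+t^2)) t := by
  have h1 : HasDerivAt (fun t : ℝ => 1 + t^2) (2*t) t := by
    simpa using ((hasDerivAt_pow 2 t).const_add 1)
  have h2 : HasDerivAt (fun t : ℝ => Real.log (1+t^2)) (2*t/(1+t^2)) t :=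
    h1.log (one_add_sq_pos t).ne'
  have h3 := (h2.sub (hasDerivAt_pow 2 t)).add ((hasDerivAt_pow 4 t).div_const 2)
  refine h3.congr_deriv ?_
  have := (one_add_sq_pos t).ne'
  field_simp
  ring

lemma Gf_zero : Gf 0 = 0 := by simp [Gf]

lemma Gf_nonneg {t : ℝ} (ht : 0 ≤ t) : 0 ≤ Gf t := by
  have mono : MonotoneOn Gf (Ici 0) := by
    apply monotoneOn_of_deriv_nonneg (convex_Ici 0)
      (fun x _ => (Gf_hasDerivAt x).continuousAt.continuousWithinAt)
      (fun x _ => ((Gf_hasDerivAt x).differentiableAt).differentiableWithinAt)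
    intro x hx
    rw [interior_Ici] at hx
    have hx' : (0:ℝ) < x := hx
    rw [(Gf_hasDerivAt x).deriv]
    positivity
  have := mono self_mem_Ici ht ht
  rwa [Gf_zero] at this

lemma Gf_le_cube {t : ℝ} (ht : 0 ≤ t) : Gf t ≤ t^6/3 := by
  set H : ℝ → ℝ := fun t => t^6/3 - Gf t with hH
  have hd : ∀ x : ℝ, HasDerivAt H (2*x^7/(1+x^2)) x := by
    intro x
    have h3 := ((hasDerivAt_pow 6 x).div_const 3).sub (Gf_hasDerivAt x)
    refine h3.congr_deriv ?_
    have := (one_add_sq_pos x).ne'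
    field_simp
    ring
  have mono : MonotoneOn H (Ici 0) := by
    apply monotoneOn_of_deriv_nonneg (convex_Ici 0)
      (fun x _ => (hd x).continuousAt.continuousWithinAt)
      (fun x _ => ((hd x).differentiableAt).differentiableWithinAt)
    intro x hx
    rw [interior_Ici] at hx
    have hx' : (0:ℝ) < x := hx
    rw [(hd x).deriv]
    positivity
  have := mono self_mem_Ici ht ht
  simp only [hH, Gf_zero] at this
  norm_num at this
  linarith

lemma Gf_le_quart (t : ℝ) : Gf t ≤ t^4/2 := by
  have h := Real.log_le_sub_one_of_pos (one_add_sq_pos t)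
  simp only [Gf]
  linarith

lemma Ff_hasDerivAt {t : ℝ} (ht : 0 < t) : HasDerivAt Ff (t^(-6:ℤ) * Gf t) t := by
  have h5 : HasDerivAt (fun t : ℝ => t^5) (5*t^4) t := by simpa using hasDerivAt_pow 5 t
  have hdiv : HasDerivAt (fun t => Gf t / t^5)
      ((2*t^5/(1+t^2) * t^5 - Gf t * (5*t^4))/(t^5)^2) t :=
    (Gf_hasDerivAt t).div h5 (by positivity)
  have h := ((Real.hasDerivAt_arctan t).const_mul (2/5:ℝ)).sub (hdiv.const_mul (1/5:ℝ))
  refine h.congr_deriv ?_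
  have ht' := ht.ne'
  have h2 := (one_add_sq_pos t).ne'
  have hz : (t:ℝ)^(-6:ℤ) = (t^(6:ℕ))⁻¹ := by
    rw [zpow_neg, show ((6:ℤ)) = ((6:ℕ):ℤ) from rfl, zpow_natCast]
  rw [hz]
  field_simp
  ring

lemma Ff_tendsto : Tendsto Ff atTop (𝓝 (π/5)) := by
  have h1 : Tendsto (fun t : ℝ => 2/5 * Real.arctan t) atTop (𝓝 (2/5 * (π/2))) :=
    (tendsto_nhds_of_tendsto_nhdsWithin Real.tendsto_arctan_atTop).const_mul _
  have h2 : Tendsto (fun t : ℝ => Gf t / t^5) atTop (𝓝 0) := by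
    have hup : Tendsto (fun t : ℝ => (2*t)⁻¹) atTop (𝓝 0) := by
      apply Tendsto.inv_tendsto_atTop
      exact Tendsto.const_mul_atTop two_pos tendsto_id
    refine tendsto_of_tendsto_of_tendsto_of_le_of_le' tendsto_const_nhds hup ?_ ?_
    · filter_upwards [eventually_gt_atTop (0:ℝ)] with t ht
      exact div_nonneg (Gf_nonneg ht.le) (by positivity)
    · filter_upwards [eventually_gt_atTop (0:ℝ)] with t ht
      have h := Gf_le_quart t
      rw [div_le_iff₀ (by positivity), ← sub_nonneg]
      have he : (2*t)⁻¹ * t^5 = t^4/2 := by field_simp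
      rw [he, ← sub_nonneg] at *
      linarith
  have := h1.sub ((h2.const_mul (1/5:ℝ)).congr (fun t => rfl))
  simp only [mul_zero, sub_zero] at this
  convert this using 2
  · rfl
  ring

lemma Ff_zero : Ff 0 = 0 := by simp [Ff, Gf]

lemma Ff_cont0 : ContinuousWithinAt Ff (Ici 0) 0 := by
  rw [ContinuousWithinAt, Ff_zero]
  have h2 : Tendsto (fun t : ℝ => Gf t / t^5) (𝓝[Ici 0] 0) (𝓝 0) := by
    have hup : Tendsto (fun t : ℝ => t/3) (𝓝[Ici 0] 0) (𝓝 0) := by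
      have : Tendsto (fun t : ℝ => t/3) (𝓝 0) (𝓝 (0/3)) :=
        (continuous_id.div_const 3).tendsto 0
      simpa using this.mono_left nhdsWithin_le_nhds
    refine tendsto_of_tendsto_of_tendsto_of_le_of_le' tendsto_const_nhds hup ?_ ?_
    · filter_upwards [self_mem_nhdsWithin] with t (ht : 0 ≤ t)
      rcases eq_or_lt_of_le ht with h | h
      · simp [← h, Gf_zero]
      · exact div_nonneg (Gf_nonneg ht) (by positivity)
    · filter_upwards [self_mem_nhdsWithin] with t (ht : 0 ≤ t)
      rcases eq_or_lt_of_le ht with h | h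
      · simp [← h, Gf_zero]
      · rw [div_le_iff₀ (by positivity)]
        have hle := Gf_le_cube ht
        have he : t/3 * t^5 = t^6/3 := by ring
        rw [he]
        linarith
  have h1 : Tendsto (fun t : ℝ => 2/5 * Real.arctan t) (𝓝[Ici 0] 0) (𝓝 (2/5 * Real.arctan 0)) :=
    ((Real.continuous_arctan.tendsto 0).const_mul _).mono_left nhdsWithin_le_nhds
  have key : Tendsto Ff (𝓝[Ici 0] 0) (𝓝 (2/5 * Real.arctan 0 - 1/5 * 0)) :=
    h1.sub (h2.const_mul (1/5:ℝ))
  simpa using key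

lemma f_nonneg {s : ℝ} (hs : 0 < s) : 0 ≤ s^(-6:ℤ) * Gf s :=
  mul_nonneg (zpow_nonneg hs.le _) (Gf_nonneg hs.le)

lemma integrable_f : IntegrableOn (fun t : ℝ => t^(-6:ℤ) * Gf t) (Ioi 0) :=
  integrableOn_Ioi_deriv_of_nonneg Ff_cont0 (fun x hx => Ff_hasDerivAt hx)
    (fun x hx => f_nonneg hx) Ff_tendsto

lemma integral_f : ∫ t in Ioi 0, t^(-6:ℤ) * Gf t = π/5 := by
  have := integral_Ioi_of_hasDerivAt_of_nonneg Ff_cont0 (fun x hx => Ff_hasDerivAt hx)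
    (fun x hx => f_nonneg hx) Ff_tendsto
  rw [this, Ff_zero, sub_zero]

noncomputable def c (k : ℕ) : ℝ := ((k:ℝ)+1) * π

lemma c_pos (k : ℕ) : 0 < c k := by
  have := Real.pi_pos
  unfold c
  positivity

lemma hasSum_log {s : ℝ} (hs : 0 < s) :
    HasSum (fun k : ℕ => Real.log (1 + (s * (c k)⁻¹)^2)) (Real.log (Real.sinh s / s)) := by
  set a : ℕ → ℝ := fun k => 1 + (s*(c k)⁻¹)^2 with ha
  have ha1 : ∀ k, 1 ≤ a k := fun k => le_add_of_nonneg_right (sq_nonneg _)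
  have ha0 : ∀ k, a k ≠ 0 := fun k => by have := ha1 k; linarith
  have hπ : (π:ℂ) ≠ 0 := Complex.ofReal_ne_zero.2 Real.pi_ne_zero
  -- the complex Euler product specialized at z = s*I/π
  have h0 := Complex.tendsto_euler_sin_prod ((s:ℂ) * Complex.I / (π:ℂ))
  -- rewrite each factor as a real number
  have hfac : ∀ j : ℕ, (1:ℂ) - ((s:ℂ) * Complex.I / (π:ℂ))^2 / ((j:ℂ)+1)^2 = ((a j : ℝ) : ℂ) := by
    intro j
    have hj : ((j:ℂ)+1) ≠ 0 := Nat.cast_add_one_ne_zero j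
    have hc : ((c j : ℝ) : ℂ) = ((j:ℂ)+1) * (π:ℂ) := by
      unfold c; push_cast; ring
    rw [ha]
    push_cast
    rw [hc, div_pow, mul_pow, Complex.I_sq]
    field_simp
    ring
  have h1 := h0.mul_const (-Complex.I)
  have key : ∀ n : ℕ,
      ((π:ℂ) * ((s:ℂ) * Complex.I / (π:ℂ)) *
        ∏ j ∈ Finset.range n, ((1:ℂ) - ((s:ℂ) * Complex.I / (π:ℂ))^2 / ((j:ℂ)+1)^2)) *
        (-Complex.I)
      = (((s * ∏ j ∈ Finset.range n, a j : ℝ)) : ℂ) := by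
    intro n
    rw [Finset.prod_congr rfl (fun j _ => hfac j), mul_div_cancel₀ _ hπ]
    push_cast
    rw [mul_assoc ((s:ℂ)) Complex.I _, mul_comm Complex.I _, mul_assoc, mul_assoc]
    rw [show Complex.I * -Complex.I = 1 by
      rw [mul_neg, Complex.I_mul_I]; norm_num]
    ring
  have hlim : Complex.sin ((π:ℂ) * ((s:ℂ) * Complex.I / (π:ℂ))) * (-Complex.I)
      = ((Real.sinh s : ℝ) : ℂ) := by
    rw [mul_div_cancel₀ _ hπ, Complex.sin_mul_I]
    rw [mul_assoc, mul_neg, Complex.I_mul_I]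
    push_cast [Complex.ofReal_sinh]
    ring
  rw [hlim] at h1
  have h2 : Tendsto (fun n => (s * ∏ j ∈ Finset.range n, a j : ℝ)) atTop (𝓝 (Real.sinh s)) := by
    have h3 := (Complex.continuous_re.tendsto (((Real.sinh s : ℝ)) : ℂ)).comp h1
    rw [Complex.ofReal_re] at h3
    refine h3.congr fun n => ?_
    simp only [Function.comp_apply]
    rw [key n, Complex.ofReal_re]
  have hP : Tendsto (fun n => ∏ j ∈ Finset.range n, a j) atTop (𝓝 (Real.sinh s / s)) := by
    have := h2.div_const s
    refine this.congr fun n => ?_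
    exact mul_div_cancel_left₀ _ hs.ne'
  have hsinh : 0 < Real.sinh s / s := div_pos (Real.sinh_pos_iff.2 hs) hs
  have hlog : Tendsto (fun n => Real.log (∏ j ∈ Finset.range n, a j)) atTop
      (𝓝 (Real.log (Real.sinh s / s))) :=
    ((Real.continuousAt_log hsinh.ne').tendsto).comp hP
  rw [hasSum_iff_tendsto_nat_of_nonneg (fun k => Real.log_nonneg (ha1 k))]
  exact hlog.congr fun n => Real.log_prod (fun j _ => ha0 j)

lemma hasSum_one_div_sq : HasSum (fun n : ℕ => (1:ℝ)/((n:ℝ)+1)^2) (π^2/6) := by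
  have h0 : HasSum (fun n : ℕ => (1:ℝ)/(((n+1:ℕ)):ℝ)^2) (π^2/6) := by
    apply (hasSum_nat_add_iff (f := fun n : ℕ => (1:ℝ)/(n:ℝ)^2) 1).2
    simpa using hasSum_zeta_two
  simpa using h0

lemma hasSum_one_div_four : HasSum (fun n : ℕ => (1:ℝ)/((n:ℝ)+1)^4) (π^4/90) := by
  have h0 : HasSum (fun n : ℕ => (1:ℝ)/(((n+1:ℕ)):ℝ)^4) (π^4/90) := by
    apply (hasSum_nat_add_iff (f := fun n : ℕ => (1:ℝ)/(n:ℝ)^4) 1).2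
    simpa using hasSum_zeta_four
  simpa using h0

lemma summable_one_div_five : Summable (fun n : ℕ => (1:ℝ)/((n:ℝ)+1)^5) := by
  have h := (summable_nat_add_iff (f := fun n : ℕ => (1:ℝ)/(n:ℝ)^5) 1).2
    (Real.summable_one_div_nat_pow.2 (by norm_num))
  simpa using h

lemma hasSum_Gf {s : ℝ} (hs : 0 < s) :
    HasSum (fun k : ℕ => Gf (s * (c k)⁻¹))
      (Real.log (Real.sinh s / s) - s^2/6 + s^4/180) := by
  have hπ : π ≠ 0 := Real.pi_ne_zero
  have hb : HasSum (fun k : ℕ => (s * (c k)⁻¹)^2) (s^2/6) := by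
    have h := hasSum_one_div_sq.mul_left (s^2/π^2)
    have hval : s^2/π^2 * (π^2/6) = s^2/6 := by field_simp
    rw [hval] at h
    have he : ∀ k : ℕ, s^2/π^2 * ((1:ℝ)/((k:ℝ)+1)^2) = (s * (c k)⁻¹)^2 := by
      intro k
      have hk : ((k:ℝ)+1) ≠ 0 := by positivity
      unfold c
      field_simp
    simpa only [he] using h
  have hd : HasSum (fun k : ℕ => (s * (c k)⁻¹)^4/2) (s^4/180) := by
    have h := hasSum_one_div_four.mul_left (s^4/(2*π^4))
    have hval : s^4/(2*π^4) * (π^4/90) = s^4/180 := by field_simp; ring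
    rw [hval] at h
    have he : ∀ k : ℕ, s^4/(2*π^4) * ((1:ℝ)/((k:ℝ)+1)^4) = (s * (c k)⁻¹)^4/2 := by
      intro k
      have hk : ((k:ℝ)+1) ≠ 0 := by positivity
      unfold c
      field_simp
    simpa only [he] using h
  have h := ((hasSum_log hs).sub hb).add hd
  simpa [Gf] using h

noncomputable def fk (k : ℕ) (s : ℝ) : ℝ :=
  (c k)^(-6:ℤ) * ((s * (c k)⁻¹)^(-6:ℤ) * Gf (s * (c k)⁻¹))

lemma fk_eq {k : ℕ} {s : ℝ} : fk k s = s^(-6:ℤ) * Gf (s * (c k)⁻¹) := by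
  unfold fk
  rw [mul_zpow, inv_zpow', neg_neg]
  have h1 : (c k)^(-6:ℤ) * (c k)^(6:ℤ) = 1 := by
    rw [← zpow_add₀ (c_pos k).ne']
    norm_num
  calc (c k)^(-6:ℤ) * (s^(-6:ℤ) * (c k)^(6:ℤ) * Gf (s * (c k)⁻¹))
      = ((c k)^(-6:ℤ) * (c k)^(6:ℤ)) * (s^(-6:ℤ) * Gf (s * (c k)⁻¹)) := by ring
    _ = s^(-6:ℤ) * Gf (s * (c k)⁻¹) := by rw [h1, one_mul]

lemma hasSum_integrand {s : ℝ} (hs : 0 < s) :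
    HasSum (fun k : ℕ => fk k s)
      (s^(-6:ℤ) * (Real.log (Real.sinh s / s) - s^2/6 + s^4/180)) := by
  have h := (hasSum_Gf hs).mul_left (s^(-6:ℤ))
  simpa only [fk_eq] using h

lemma integrable_fk (k : ℕ) : IntegrableOn (fk k) (Ioi 0) := by
  have h : IntegrableOn (fun s : ℝ => (s * (c k)⁻¹)^(-6:ℤ) * Gf (s * (c k)⁻¹)) (Ioi 0) := by
    have := (integrableOn_Ioi_comp_mul_right_iff (fun t : ℝ => t^(-6:ℤ) * Gf t) 0
      (inv_pos.2 (c_pos k))).2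
    rw [zero_mul] at this
    exact this integrable_f
  exact h.const_mul _

lemma fk_nonneg {k : ℕ} {s : ℝ} (hs : 0 < s) : 0 ≤ fk k s := by
  unfold fk
  have h1 : (0:ℝ) ≤ s * (c k)⁻¹ := mul_nonneg hs.le (inv_nonneg.2 (c_pos k).le)
  exact mul_nonneg (zpow_nonneg (c_pos k).le _)
    (mul_nonneg (zpow_nonneg h1 _) (Gf_nonneg h1))

lemma integral_fk (k : ℕ) : ∫ s in Ioi 0, fk k s = (c k)^(-5:ℤ) * (π/5) := by
  unfold fk
  rw [MeasureTheory.integral_const_mul]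
  rw [MeasureTheory.integral_comp_mul_right_Ioi (fun t : ℝ => t^(-6:ℤ) * Gf t) 0
    (inv_pos.2 (c_pos k))]
  rw [zero_mul, smul_eq_mul, integral_f, inv_inv]
  rw [show ((c k):ℝ)^(-5:ℤ) = (c k)^(-6:ℤ) * c k from by
    rw [← zpow_add_one₀ (c_pos k).ne']; norm_num]
  ring

lemma summable_aux : Summable (fun k : ℕ => (c k)^(-5:ℤ) * (π/5)) := by
  apply Summable.mul_right
  have h := summable_one_div_five.mul_left (π^(-5:ℤ))
  refine h.congr fun k => ?_
  have hk : ((k:ℝ)+1) ≠ 0 := by positivity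
  have hπ : π ≠ 0 := Real.pi_ne_zero
  have h5 : ∀ x : ℝ, x^(-5:ℤ) = (x^(5:ℕ))⁻¹ := by
    intro x
    rw [zpow_neg, show ((5:ℤ)) = ((5:ℕ):ℤ) from rfl, zpow_natCast]
  rw [h5, h5]
  unfold c
  field_simp

lemma integral_total :
    ∫ s in Ioi (0:ℝ), s ^ (-6:ℤ) *
      (Real.log (Real.sinh s / s) - s ^ 2 / 6 + s ^ 4 / 180)
    = ∑' k : ℕ, (c k)^(-5:ℤ) * (π/5) := by
  have hnorm : ∀ k : ℕ, ∫ s in Ioi (0:ℝ), ‖fk k s‖ = (c k)^(-5:ℤ) * (π/5) := by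
    intro k
    rw [← integral_fk k]
    refine setIntegral_congr_fun measurableSet_Ioi fun s hs => ?_
    exact Real.norm_of_nonneg (fk_nonneg hs)
  have hsum : Summable fun k : ℕ => ∫ s in Ioi (0:ℝ), ‖fk k s‖ := by
    apply Summable.congr summable_aux
    intro k
    exact (hnorm k).symm
  have hint := MeasureTheory.integral_tsum_of_summable_integral_norm
    (F := fk) (μ := volume.restrict (Ioi 0)) (fun k => integrable_fk k) hsum
  rw [show (∫ s in Ioi (0:ℝ), s ^ (-6:ℤ) *
      (Real.log (Real.sinh s / s) - s ^ 2 / 6 + s ^ 4 / 180))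
      = ∫ s in Ioi (0:ℝ), (∑' k : ℕ, fk k s) from
    setIntegral_congr_fun measurableSet_Ioi fun s hs =>
      ((hasSum_integrand hs).tsum_eq).symm]
  rw [← hint]
  exact tsum_congr fun k => integral_fk k

lemma tsum_total : ∑' k : ℕ, (c k)^(-5:ℤ) * (π/5)
    = π^(-4:ℤ)/5 * ∑' k : ℕ, (1:ℝ)/((k:ℝ)+1)^5 := by
  rw [← tsum_mul_left]
  refine tsum_congr fun k => ?_
  have hk : ((k:ℝ)+1) ≠ 0 := by positivity
  have hπ : π ≠ 0 := Real.pi_ne_zero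
  have h5 : ∀ x : ℝ, x^(-5:ℤ) = (x^(5:ℕ))⁻¹ := fun x => by
    rw [zpow_neg, show ((5:ℤ)) = ((5:ℕ):ℤ) from rfl, zpow_natCast]
  have h4 : (π:ℝ)^(-4:ℤ) = (π^(4:ℕ))⁻¹ := by
    rw [zpow_neg, show ((4:ℤ)) = ((4:ℕ):ℤ) from rfl, zpow_natCast]
  rw [h5, h4]
  unfold c
  field_simp

end ZetaFive

open ZetaFive in
/-- `ζ(5) = 5π⁴ ∫₀^∞ s^{-6}(ln(sinh s / s) − s²/6 + s⁴/180) ds`. -/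
theorem zeta_five_integral_log_sinh :
    riemannZeta 5 = 5 * (Real.pi : ℂ) ^ 4 *
      ((∫ s in Set.Ioi (0 : ℝ), s ^ (-6 : ℤ) *
        (Real.log (Real.sinh s / s) - s ^ 2 / 6 + s ^ 4 / 180) : ℝ) : ℂ) := by
  rw [zeta_eq_tsum_one_div_nat_add_one_cpow (by norm_num : 1 < (5:ℂ).re)]
  rw [integral_total, tsum_total]
  have hS : ∑' n : ℕ, 1/((n:ℂ)+1)^(5:ℂ)
      = ((∑' k : ℕ, (1:ℝ)/((k:ℝ)+1)^5 : ℝ) : ℂ) := by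
    rw [Complex.ofReal_tsum]
    refine tsum_congr fun n => ?_
    rw [show ((5:ℂ)) = ((5:ℕ):ℂ) from by norm_num, Complex.cpow_natCast]
    push_cast
    ring
  rw [hS]
  have hπ : (π:ℝ) ≠ 0 := Real.pi_ne_zero
  have hπc : (π:ℂ) ≠ 0 := Complex.ofReal_ne_zero.2 hπ
  have h4 : (π:ℝ)^(-4:ℤ) = (π^(4:ℕ))⁻¹ := by
    rw [zpow_neg, show ((4:ℤ)) = ((4:ℕ):ℤ) from rfl, zpow_natCast]
  rw [h4]
  push_cast
  field_simp
end
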